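/- arXiv:2008.03816 — 4 statements merged into one kernel-verified Lean document; each statement's English description precedes it below -/
import Mathlib

section
/- Let 𝒫 be a collection of linear contractions of L¹(𝕋) preserving the space of functions of bounded variation and satisfying a uniform Lasota–Yorke inequality: there are ρ ∈ (0,1) and C > 0 with |Pf|_v ≤ ρ|f|_v + C‖f‖₁ for all P ∈ 𝒫 and all BV functions f. Let {P_n}_{n≥1} ⊂ 𝒫 be a sequence satisfying exponential mixing on mean-zero BV functions: there are D > 0 and θ ∈ (0,1) such that |P_{m+l} ⋯ P_{m+1} f|_v ≤ Dθ^l |f|_v for all m ≥ 0, l ≥ 1 and all f ∈ 𝒱₀. Then for every ε > 0 there exist an integer q(ε) ≥ 1 and δ(ε) > 0 such that for any operators R_1, …, R_{q(ε)} ∈ 𝒫 with d₁(R_k, P_k) < δ(ε) for each 1 ≤ k ≤ q(ε), one has ‖R_{q(ε)} ⋯ R_1 f‖₁ ≤ ε |f|_v for every f ∈ 𝒱₀. -/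
open MeasureTheory Set Filter
open scoped ENNReal NNReal

attribute [local instance] Classical.propDecidable

noncomputable section

namespace DRW

/-- The unit circle `𝕋 = ℝ/ℤ`. -/
abbrev T1 := UnitAddCircle

/-- `F : ℝ → ℝ` is a lift of the circle map `T : 𝕋 → 𝕋`. -/
def IsLift (T : T1 → T1) (F : ℝ → ℝ) : Prop :=
  ∀ x : ℝ, T (x : T1) = ((F x : ℝ) : T1)

/-- `T` is a `C^{1+Lip}` circle map with `γ ≤ |T′| ≤ K` and `Lip(T′) ≤ K₁`. -/
def ExpandingC1Lip (T : T1 → T1) (γ K K₁ : ℝ) : Prop :=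
  ∃ F : ℝ → ℝ, IsLift T F ∧ Differentiable ℝ F ∧
    (∀ x, γ ≤ |deriv F x| ∧ |deriv F x| ≤ K) ∧
    LipschitzWith (Real.toNNReal K₁) (deriv F)

/-- `W` is the (half-open) arc starting at `a` of length `l`. -/
def IsArc (W : Set T1) (a l : ℝ) : Prop :=
  0 < l ∧ l ≤ 1 ∧ W = (fun x : ℝ => (x : T1)) '' Set.Ico a (a + l)

/-- The induced map `G_n` on the circle. -/
def inducedMap (T : ℤ → T1 → T1) (W : ℤ → Set T1) (n : ℤ) (x : T1) : T1 :=
  if x ∈ W n then T n (T (n - 1) (T n x)) else T n x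

/-- The time `r_n` spent to move from level `n` to level `n+1`. -/
def stepTime (W : ℤ → Set T1) (n : ℤ) (x : T1) : ℝ :=
  if x ∈ W n then 3 else 1

/-- `orbitMap T W k = G_{k-1} ∘ ⋯ ∘ G_0`. -/
def orbitMap (T : ℤ → T1 → T1) (W : ℤ → Set T1) : ℕ → T1 → T1
  | 0 => id
  | k + 1 => inducedMap T W k ∘ orbitMap T W k

/-- Hitting time of level `n`: `τ_n(x) = ∑_{k=0}^{n-1} r_k(G_{k-1} ∘ ⋯ ∘ G_0 x)`. -/
def hitTime (T : ℤ → T1 → T1) (W : ℤ → Set T1) (n : ℕ) (x : T1) : ℝ :=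
  ∑ k ∈ Finset.range n, stepTime W k (orbitMap T W k x)

/-- `E(τ_n)`. -/
def meanHit (T : ℤ → T1 → T1) (W : ℤ → Set T1) (n : ℕ) : ℝ :=
  ∫ x : T1, hitTime T W n x

/-- `Var(τ_n)`. -/
def varHit (T : ℤ → T1 → T1) (W : ℤ → Set T1) (n : ℕ) : ℝ :=
  (∫ x : T1, (hitTime T W n x) ^ 2) - (meanHit T W n) ^ 2

/-- Convergence in distribution to the standard normal law `N(0,1)`. -/
def TendstoNormal {Ω : Type*} [MeasurableSpace Ω] (μ : Measure Ω) (X : ℕ → Ω → ℝ) : Prop :=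
  ∀ t : ℝ, Tendsto (fun n => (μ {ω | X n ω ≤ t}).toReal) atTop
    (nhds ((ProbabilityTheory.gaussianReal 0 1 (Set.Iic t)).toReal))

/-- The CLT for hitting times: `(τ_n − E(τ_n))/√Var(τ_n) ⇒ N(0,1)`
with `x` uniformly distributed on `𝕋`. -/
def HitCLT (T : ℤ → T1 → T1) (W : ℤ → Set T1) : Prop :=
  TendstoNormal (volume : Measure T1) fun n x =>
    (hitTime T W n x - meanHit T W n) / Real.sqrt (varHit T W n)

/-- Ballisticity gate conditions: `T_n(W_n) ∩ W_{n−1} = ∅` and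
`T_{n−1}(T_n(W_n)) ∩ W_n = ∅`. -/
def GateCond (T : ℤ → T1 → T1) (W : ℤ → Set T1) : Prop :=
  ∀ n : ℤ, (T n '' W n) ∩ W (n - 1) = ∅ ∧ (T (n - 1) '' (T n '' W n)) ∩ W n = ∅

/-- Model A. -/
def ModelA (T : ℤ → T1 → T1) (W : ℤ → Set T1) (γ K K₁ c δ₀ : ℝ) : Prop :=
  (∀ n, ExpandingC1Lip (T n) γ K K₁) ∧
  (∀ n, ∃ a l, IsArc (W n) a l ∧ c * δ₀ ≤ l ∧ l ≤ δ₀) ∧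
  GateCond T W

/-- `fwdComp T n j = T_{n+j} ∘ ⋯ ∘ T_{n+1} ∘ (T_n ∘ T_{n-1} ∘ T_n)`. -/
def fwdComp (T : ℤ → T1 → T1) (n : ℤ) : ℕ → T1 → T1
  | 0 => T n ∘ T (n - 1) ∘ T n
  | j + 1 => T (n + j + 1) ∘ fwdComp T n j

/-- Model A′: Model A together with the gate conditions `(4)_N`. -/
def ModelA' (T : ℤ → T1 → T1) (W : ℤ → Set T1) (γ K K₁ c δ₀ : ℝ) (N : ℕ) : Prop :=
  ModelA T W γ K K₁ c δ₀ ∧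
  ∀ (n : ℤ) (k : ℕ), 1 ≤ k → k ≤ N →
    (fwdComp T n (k - 1) '' W n) ∩ W (n + k) = ∅

/-- `‖T − S‖_{C^{1+Lip}} ≤ δ` (via lifts): the `C¹` distance plus the Lipschitz
constant of the difference of the derivatives is at most `δ`. -/
def C1LipClose (T S : T1 → T1) (δ : ℝ) : Prop :=
  ∃ F G : ℝ → ℝ, IsLift T F ∧ IsLift S G ∧ Differentiable ℝ F ∧ Differentiable ℝ G ∧
    ∃ a b c : ℝ, 0 ≤ a ∧ 0 ≤ b ∧ 0 ≤ c ∧ a + b + c ≤ δ ∧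
      (∀ x, |F x - G x| ≤ a) ∧ (∀ x, |deriv F x - deriv G x| ≤ b) ∧
      LipschitzWith (Real.toNNReal c) fun x => deriv F x - deriv G x

/-- Model B relative to the fixed pair `(T̄, W̄)`. -/
def ModelB (T : ℤ → T1 → T1) (W : ℤ → Set T1) (Tbar : T1 → T1) (Wbar : Set T1)
    (δ₀ : ℝ) : Prop :=
  (∀ n, ∃ a l, IsArc (W n) a l) ∧
  (∀ n, C1LipClose (T n) Tbar δ₀) ∧
  (∀ n, Metric.hausdorffDist (W n) Wbar ≤ δ₀)

/-- One step of the dynamical walk `F(x,z)`. -/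
def walkStep (T : ℤ → T1 → T1) (W : ℤ → Set T1) (p : T1 × ℤ) : T1 × ℤ :=
  (T p.2 p.1, if p.1 ∈ W p.2 then p.2 - 1 else p.2 + 1)

/-- `z_n`, the `ℤ`-coordinate of the walk after `n` steps started at `(x,0)`. -/
def zCoord (T : ℤ → T1 → T1) (W : ℤ → Set T1) (n : ℕ) (x : T1) : ℤ :=
  ((walkStep T W)^[n] (x, 0)).2

/-- The hitting time of level `m`, as the least `t` with `z_t = m`. -/
def hitLevel (T : ℤ → T1 → T1) (W : ℤ → Set T1) (m : ℤ) (x : T1) : ℕ :=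
  sInf {t : ℕ | zCoord T W t x = m}

/-- The scale function `𝒮(z) = E(τ_z)`. -/
def scaleS (T : ℤ → T1 → T1) (W : ℤ → Set T1) (z : ℤ) : ℝ :=
  ∫ x : T1, (hitLevel T W z x : ℝ)

/-- `Var(τ_z)` for the walk hitting times. -/
def varLevel (T : ℤ → T1 → T1) (W : ℤ → Set T1) (z : ℤ) : ℝ :=
  (∫ x : T1, ((hitLevel T W z x : ℝ)) ^ 2) - (scaleS T W z) ^ 2

/-- `𝒵(s) = max{z : 𝒮(z) ≤ s}`. -/
def invScale (T : ℤ → T1 → T1) (W : ℤ → Set T1) (s : ℝ) : ℤ :=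
  sSup {z : ℤ | scaleS T W z ≤ s}

/-- `σ̂_n = √Var(τ_{𝒵(n)})`. -/
def sigmaHat (T : ℤ → T1 → T1) (W : ℤ → Set T1) (n : ℕ) : ℝ :=
  Real.sqrt (varLevel T W (invScale T W (n : ℝ)))

/-- `Gcomp T W i = G_{1,i} = G_i ∘ ⋯ ∘ G_1`. -/
def Gcomp (T : ℤ → T1 → T1) (W : ℤ → Set T1) : ℕ → T1 → T1
  | 0 => id
  | i + 1 => inducedMap T W ((i : ℤ) + 1) ∘ Gcomp T W i

/-- The nonstationary variance
`σ_n² = ∫ (∑_{i=1}^n [τ_i(G_{1,i}x) − ∫ τ_i(G_{1,i}y) dy])² dx`. -/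
def sigmaSq (T : ℤ → T1 → T1) (W : ℤ → Set T1) (n : ℕ) : ℝ :=
  ∫ x : T1, (∑ i ∈ Finset.Icc 1 n,
    (stepTime W (i : ℤ) (Gcomp T W i x) -
      ∫ y : T1, stepTime W (i : ℤ) (Gcomp T W i y))) ^ 2

/-- `ξ` is an iid sequence of labels under `P`. -/
def IIDEnv {Ω : Type*} [MeasurableSpace Ω] {m : ℕ} (P : Measure Ω)
    (ξ : Ω → ℤ → Fin m) : Prop :=
  (∀ n, Measurable fun ω => ξ ω n) ∧
  (ProbabilityTheory.iIndepFun (fun n ω => ξ ω n) P) ∧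
  ∀ i j : ℤ, ProbabilityTheory.IdentDistrib (fun ω => ξ ω i) (fun ω => ξ ω j) P P

/-- The maps of the environment selected by `f`. -/
def envT {m : ℕ} (E : Fin m → (T1 → T1) × Set T1) (f : ℤ → Fin m) : ℤ → T1 → T1 :=
  fun n => (E (f n)).1

/-- The gates of the environment selected by `f`. -/
def envW {m : ℕ} (E : Fin m → (T1 → T1) × Set T1) (f : ℤ → Fin m) : ℤ → Set T1 :=
  fun n => (E (f n)).2

/-- Total variation of a function on the circle. -/
def eVar (f : T1 → ℝ) : ℝ≥0∞ := eVariationOn (fun x : ℝ => f (x : T1)) (Set.Icc 0 1)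

/-- The BV norm `|f|_v = V(f) + ‖f‖₁` of a function on the circle. -/
def bvNormF (f : T1 → ℝ) : ℝ≥0∞ := eVar f + ENNReal.ofReal (∫ x : T1, |f x|)

abbrev L1T := Lp ℝ 1 (volume : Measure T1)
abbrev OpL1 := L1T →ₗ[ℝ] L1T

/-- `P` is an `L¹` contraction. -/
def IsContractionL1 (P : OpL1) : Prop := ∀ f, ‖P f‖ ≤ ‖f‖

/-- The (essential) variation of an `L¹` class. -/
def essVar (f : L1T) : ℝ≥0∞ := ⨅ (g : T1 → ℝ) (_ : ⇑f =ᵐ[volume] g), eVar g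

/-- The BV norm `|f|_v = V(f) + ‖f‖₁` of an `L¹` class. -/
def bvNorm (f : L1T) : ℝ≥0∞ := essVar f + ENNReal.ofReal ‖f‖

/-- `f ∈ 𝒱₀`: bounded variation and zero mean. -/
def memV0 (f : L1T) : Prop := essVar f ≠ ⊤ ∧ (∫ x : T1, f x) = 0

/-- `opProd P m l = P_{m+l} ∘ ⋯ ∘ P_{m+1}`. -/
def opProd (P : ℕ → OpL1) (m : ℕ) : ℕ → OpL1
  | 0 => LinearMap.id
  | l + 1 => (P (m + l + 1)).comp (opProd P m l)

/-- The metric `d₁(R,P) = sup{‖Rf − Pf‖₁ : |f|_v ≤ 1}`. -/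
def d1 (R P : OpL1) : ℝ := ⨆ f : {f : L1T // bvNorm f ≤ 1}, ‖R f.1 - P f.1‖

/-- `g` is a version of the transfer operator of `T` applied to `f`:
`∫ g·φ = ∫ f·(φ∘T)` for all bounded measurable `φ`. -/
def IsTransferOf (T : T1 → T1) (f g : T1 → ℝ) : Prop :=
  ∀ φ : T1 → ℝ, Measurable φ → (∃ M, ∀ x, |φ x| ≤ M) →
    (∫ x : T1, g x * φ x) = ∫ x : T1, f x * φ (T x)

/-- `h` is a version of `P_S 𝟙` (the density of the pushforward of Lebesgue under `S`). -/
def IsPushDensity (S : T1 → T1) (h : T1 → ℝ) : Prop :=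
  ∀ φ : T1 → ℝ, Measurable φ → (∃ M, ∀ x, |φ x| ≤ M) →
    (∫ x : T1, h x * φ x) = ∫ x : T1, φ (S x)

/-- `compSeq T n = T_n ∘ ⋯ ∘ T_1`. -/
def compSeq {α : Type*} (T : ℕ → α → α) : ℕ → α → α
  | 0 => id
  | n + 1 => T (n + 1) ∘ compSeq T n

/-- `T` is piecewise `C^{1+Lip}` with `γ ≤ |T′| ≤ K`, `Lip(T′) ≤ K₁` on each
piece, continuous except possibly at the endpoints of the arc from `a` of length `l`. -/
def PiecewiseExpandingArc (T : T1 → T1) (a l γ K K₁ : ℝ) : Prop :=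
  ∃ F₁ F₂ : ℝ → ℝ, Differentiable ℝ F₁ ∧ Differentiable ℝ F₂ ∧
    (∀ x, γ ≤ |deriv F₁ x| ∧ |deriv F₁ x| ≤ K) ∧
    (∀ x, γ ≤ |deriv F₂ x| ∧ |deriv F₂ x| ≤ K) ∧
    LipschitzWith (Real.toNNReal K₁) (deriv F₁) ∧
    LipschitzWith (Real.toNNReal K₁) (deriv F₂) ∧
    (∀ x ∈ Set.Ioo a (a + l), T (x : T1) = ((F₁ x : ℝ) : T1)) ∧
    (∀ x ∈ Set.Ioo (a + l) (a + 1), T (x : T1) = ((F₂ x : ℝ) : T1))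

/-- `T` is piecewise differentiable with `|T′| ≥ γ` on each piece, continuous
except possibly at the endpoints of the arc from `a` of length `l`. -/
def PiecewiseExpandingArcLB (T : T1 → T1) (a l γ : ℝ) : Prop :=
  ∃ F₁ F₂ : ℝ → ℝ, Differentiable ℝ F₁ ∧ Differentiable ℝ F₂ ∧
    (∀ x, γ ≤ |deriv F₁ x|) ∧ (∀ x, γ ≤ |deriv F₂ x|) ∧
    (∀ x ∈ Set.Ioo a (a + l), T (x : T1) = ((F₁ x : ℝ) : T1)) ∧
    (∀ x ∈ Set.Ioo (a + l) (a + 1), T (x : T1) = ((F₂ x : ℝ) : T1))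

/-- `T` is piecewise `C^{1+Lip}` with `|T′| ≥ γ` on each piece, continuous
except possibly at the endpoints of the arc from `a` of length `l`. -/
def PiecewiseC1LipArcLB (T : T1 → T1) (a l γ : ℝ) : Prop :=
  ∃ (F₁ F₂ : ℝ → ℝ) (K₁ : NNReal), Differentiable ℝ F₁ ∧ Differentiable ℝ F₂ ∧
    (∀ x, γ ≤ |deriv F₁ x|) ∧ (∀ x, γ ≤ |deriv F₂ x|) ∧
    LipschitzWith K₁ (deriv F₁) ∧ LipschitzWith K₁ (deriv F₂) ∧
    (∀ x ∈ Set.Ioo a (a + l), T (x : T1) = ((F₁ x : ℝ) : T1)) ∧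
    (∀ x ∈ Set.Ioo (a + l) (a + 1), T (x : T1) = ((F₂ x : ℝ) : T1))

/-- A piecewise expanding map with countably many branch cut points: away from
a countable set each point has a local `C^{1+Lip}` lift with `|F′| ≥ γ`. -/
def PiecewiseExpandingCountable (G : T1 → T1) (γ : ℝ) (K₁ : NNReal) : Prop :=
  ∃ s : Set ℝ, s.Countable ∧ ∀ x : ℝ, x ∉ s → ∃ F : ℝ → ℝ,
    Differentiable ℝ F ∧ LipschitzWith K₁ (deriv F) ∧ (∀ y, γ ≤ |deriv F y|) ∧
    ∀ᶠ y in nhds x, G ((y : ℝ) : T1) = ((F y : ℝ) : T1)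

/-- The return time `τ̄` of Model B: `3` on `W̄` and `1` off `W̄`. -/
def tauBar (W : Set T1) (x : T1) : ℝ := if x ∈ W then 3 else 1

/-- The distortion constant `K₀ = ∏_{n=0}^∞ (1 + (K₁/γ) γ^{-n})`. -/
def K0 (γ K₁ : ℝ) : ℝ := ∏' n : ℕ, (1 + (K₁ / γ) * (1 / γ) ^ n)

end DRW

namespace DRW


lemma eVar_const_mul (c : ℝ) (hc : 0 ≤ c) (w : T1 → ℝ) :
    eVar (fun x => c * w x) = ENNReal.ofReal c * eVar w := by
  unfold eVar eVariationOn
  rw [ENNReal.mul_iSup]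
  refine iSup_congr fun p => ?_
  rw [Finset.mul_sum]
  refine Finset.sum_congr rfl fun i _ => ?_
  rw [edist_dist, edist_dist, Real.dist_eq, Real.dist_eq, ← mul_sub, abs_mul,
    abs_of_nonneg hc, ENNReal.ofReal_mul hc]

lemma eVar_zero' : eVar (fun _ : T1 => (0 : ℝ)) = 0 := by
  refine le_antisymm ?_ (zero_le)
  unfold eVar eVariationOn
  exact iSup_le fun p => by simp

lemma essVar_zero : essVar (0 : L1T) = 0 := by
  refine le_antisymm ?_ (zero_le)
  have h0 : ⇑(0 : L1T) =ᵐ[volume] fun _ : T1 => (0 : ℝ) := Lp.coeFn_zero ℝ 1 _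
  exact le_trans (iInf₂_le (fun _ : T1 => (0 : ℝ)) h0) (le_of_eq eVar_zero')

lemma essVar_smul_ge (c : ℝ) (hc : 0 < c) (f : L1T) :
    ENNReal.ofReal c * essVar f ≤ essVar (c • f) := by
  refine le_iInf₂ fun v hv => ?_
  have h1 : ⇑(c • f) =ᵐ[volume] c • ⇑f := Lp.coeFn_smul c f
  have hw : ⇑f =ᵐ[volume] fun x => c⁻¹ * v x := by
    filter_upwards [hv, h1] with x hx1 hx2
    have : c * f x = v x := by
      have := hx2.symm.trans hx1
      simpa [Pi.smul_apply, smul_eq_mul] using this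
    rw [← this, inv_mul_cancel_left₀ hc.ne']
  have hEf : essVar f ≤ eVar (fun x => c⁻¹ * v x) := iInf₂_le _ hw
  have hkey : eVar v = ENNReal.ofReal c * eVar (fun x => c⁻¹ * v x) := by
    rw [eVar_const_mul c⁻¹ (inv_nonneg.mpr hc.le) v, ← mul_assoc,
      ← ENNReal.ofReal_mul hc.le, mul_inv_cancel₀ hc.ne', ENNReal.ofReal_one, one_mul]
  rw [hkey]
  exact mul_le_mul_right hEf _

lemma essVar_smul_le (c : ℝ) (hc : 0 < c) (f : L1T) :
    essVar (c • f) ≤ ENNReal.ofReal c * essVar f := by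
  have h := essVar_smul_ge c⁻¹ (inv_pos.mpr hc) (c • f)
  rw [smul_smul, inv_mul_cancel₀ hc.ne', one_smul] at h
  calc essVar (c • f) = ENNReal.ofReal c * (ENNReal.ofReal c⁻¹ * essVar (c • f)) := by
        rw [← mul_assoc, ← ENNReal.ofReal_mul hc.le, mul_inv_cancel₀ hc.ne',
          ENNReal.ofReal_one, one_mul]
    _ ≤ ENNReal.ofReal c * essVar f := mul_le_mul_right h _

lemma bvNorm_smul_le (c : ℝ) (hc : 0 < c) (f : L1T) :
    bvNorm (c • f) ≤ ENNReal.ofReal c * bvNorm f := by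
  unfold bvNorm
  rw [mul_add]
  refine add_le_add (essVar_smul_le c hc f) (le_of_eq ?_)
  rw [norm_smul, Real.norm_eq_abs, abs_of_pos hc, ENNReal.ofReal_mul hc.le]

lemma norm_le_one_of_bvNorm_le_one {f : L1T} (h : bvNorm f ≤ 1) : ‖f‖ ≤ 1 :=
  ENNReal.ofReal_le_one.mp (le_trans le_add_self h)

lemma d1_bddAbove (R P : OpL1) (hR : IsContractionL1 R) (hP : IsContractionL1 P) :
    BddAbove (Set.range fun f : {f : L1T // bvNorm f ≤ 1} => ‖R f.1 - P f.1‖) := by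
  refine ⟨2, ?_⟩
  rintro x ⟨f, rfl⟩
  have hf1 : ‖f.1‖ ≤ 1 := norm_le_one_of_bvNorm_le_one f.2
  calc ‖R f.1 - P f.1‖ ≤ ‖R f.1‖ + ‖P f.1‖ := norm_sub_le _ _
    _ ≤ ‖f.1‖ + ‖f.1‖ := add_le_add (hR _) (hP _)
    _ ≤ 2 := by linarith

lemma d1_nonneg (R P : OpL1) (hR : IsContractionL1 R) (hP : IsContractionL1 P) :
    0 ≤ d1 R P := by
  have h0 : bvNorm (0 : L1T) ≤ 1 := by
    unfold bvNorm
    rw [essVar_zero, norm_zero, ENNReal.ofReal_zero, add_zero]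
    exact zero_le_one
  have := le_ciSup (d1_bddAbove R P hR hP) (⟨0, h0⟩ : {f : L1T // bvNorm f ≤ 1})
  simp at this; exact this

lemma d1_bound (R P : OpL1) (hR : IsContractionL1 R) (hP : IsContractionL1 P)
    (g : L1T) (hg : bvNorm g ≠ ⊤) : ‖R g - P g‖ ≤ d1 R P * (bvNorm g).toReal := by
  by_cases hg0 : ‖g‖ = 0
  · have hz : g = 0 := norm_eq_zero.mp hg0
    rw [hz]
    simp only [map_zero, sub_zero, norm_zero]
    exact mul_nonneg (d1_nonneg R P hR hP) ENNReal.toReal_nonneg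
  · set b := (bvNorm g).toReal with hbdef
    have hgpos : (0 : ℝ≥0∞) < bvNorm g := by
      refine lt_of_lt_of_le ?_ (le_add_self : ENNReal.ofReal ‖g‖ ≤ bvNorm g)
      exact ENNReal.ofReal_pos.mpr (lt_of_le_of_ne (norm_nonneg g) (Ne.symm hg0))
    have hb0 : 0 < b := ENNReal.toReal_pos hgpos.ne' hg
    set h : L1T := b⁻¹ • g with hhdef
    have hh : bvNorm h ≤ 1 := by
      calc bvNorm h ≤ ENNReal.ofReal b⁻¹ * bvNorm g := bvNorm_smul_le _ (inv_pos.mpr hb0) g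
        _ = ENNReal.ofReal b⁻¹ * ENNReal.ofReal b := by rw [← ENNReal.ofReal_toReal hg]
        _ = 1 := by
            rw [← ENNReal.ofReal_mul (inv_pos.mpr hb0).le, inv_mul_cancel₀ hb0.ne',
              ENNReal.ofReal_one]
    have hle : ‖R h - P h‖ ≤ d1 R P :=
      le_ciSup (d1_bddAbove R P hR hP) (⟨h, hh⟩ : {f : L1T // bvNorm f ≤ 1})
    have hgb : g = b • h := by
      rw [hhdef, smul_smul, mul_inv_cancel₀ hb0.ne', one_smul]
    have key : R g - P g = b • (R h - P h) := by
      rw [smul_sub, ← _root_.map_smul, ← _root_.map_smul, ← hgb]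
    calc ‖R g - P g‖ = b * ‖R h - P h‖ := by
          rw [key, norm_smul, Real.norm_eq_abs, abs_of_pos hb0]
      _ ≤ b * d1 R P := mul_le_mul_of_nonneg_left hle hb0.le
      _ = d1 R P * b := mul_comm _ _

/-- Lemma 2.3: stability of mixing under perturbation; for
every `ε > 0` there are `q(ε)` and `δ(ε) > 0` such that any `q` operators
`δ`-close (in `d₁`) to `P_1, …, P_q` contract mean-zero BV functions in `L¹`
by a factor `ε`. -/
theorem perturbed_contraction (calP : Set OpL1) (ρ C : ℝ)
    (hρ0 : 0 < ρ) (hρ1 : ρ < 1) (hC : 0 < C)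
    (hcontr : ∀ P ∈ calP, IsContractionL1 P)
    (hLY : ∀ P ∈ calP, ∀ f : L1T,
      bvNorm (P f) ≤ ENNReal.ofReal ρ * bvNorm f + ENNReal.ofReal C * ENNReal.ofReal ‖f‖)
    (P : ℕ → OpL1) (hP : ∀ n, P n ∈ calP)
    (D θ : ℝ) (hD : 0 < D) (hθ0 : 0 < θ) (hθ1 : θ < 1)
    (hmix : ∀ m l : ℕ, 1 ≤ l → ∀ f : L1T, memV0 f →
      bvNorm (opProd P m l f) ≤ ENNReal.ofReal (D * θ ^ l) * bvNorm f) :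
    ∀ ε > (0 : ℝ), ∃ q : ℕ, 1 ≤ q ∧ ∃ δ > (0 : ℝ), ∀ R : ℕ → OpL1,
      (∀ k : ℕ, 1 ≤ k → k ≤ q → R k ∈ calP ∧ d1 (R k) (P k) < δ) →
      ∀ f : L1T, memV0 f →
        ENNReal.ofReal ‖opProd R 0 q f‖ ≤ ENNReal.ofReal ε * bvNorm f := by
  intro ε hε
  obtain ⟨N, hN⟩ := exists_pow_lt_of_lt_one (div_pos hε (by positivity : (0:ℝ) < 2 * D)) hθ1
  set q := max N 1 with hqdef
  have hq1 : 1 ≤ q := le_max_right _ _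
  have hq0 : 0 < (q : ℝ) := by exact_mod_cast hq1
  have hθq : D * θ ^ q ≤ ε / 2 := by
    have h1 : θ ^ q ≤ θ ^ N := pow_le_pow_of_le_one hθ0.le hθ1.le (le_max_left _ _)
    have h2 : θ ^ N < ε / (2 * D) := hN
    rw [lt_div_iff₀ (by positivity : (0:ℝ) < 2 * D)] at h2
    nlinarith [pow_nonneg hθ0.le q]
  set s : ℝ := 1 + ρ + C with hsdef
  have hs1 : 1 ≤ s := by simp only [hsdef]; linarith
  have hs0 : (0:ℝ) ≤ s := by linarith
  set M : ℝ := s ^ q with hMdef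
  have hM1 : 1 ≤ M := one_le_pow₀ hs1
  have hM0 : 0 < M := by linarith
  set δ : ℝ := ε / (2 * q * M) with hδdef
  have hδ0 : 0 < δ := by rw [hδdef]; positivity
  refine ⟨q, hq1, δ, hδ0, fun R hR f hf => ?_⟩
  have hfin : bvNorm f ≠ ⊤ := by
    unfold bvNorm; exact ENNReal.add_ne_top.mpr ⟨hf.1, ENNReal.ofReal_ne_top⟩
  set b := (bvNorm f).toReal with hbdef
  have hb0 : (0:ℝ) ≤ b := ENNReal.toReal_nonneg
  have hfb : bvNorm f = ENNReal.ofReal b := (ENNReal.ofReal_toReal hfin).symm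
  have hnormle : ∀ g : L1T, ENNReal.ofReal ‖g‖ ≤ bvNorm g := fun g => by
    unfold bvNorm; exact le_add_self
  have grow : ∀ k : ℕ, bvNorm (opProd P 0 k f) ≤ ENNReal.ofReal (s ^ k) * bvNorm f := by
    intro k
    induction k with
    | zero => simp [opProd]
    | succ k ih =>
      have hstep := hLY (P (0 + k + 1)) (hP _) (opProd P 0 k f)
      calc bvNorm (opProd P 0 (k + 1) f)
          = bvNorm (P (0 + k + 1) (opProd P 0 k f)) := rfl
        _ ≤ ENNReal.ofReal ρ * bvNorm (opProd P 0 k f)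
            + ENNReal.ofReal C * ENNReal.ofReal ‖opProd P 0 k f‖ := hstep
        _ ≤ ENNReal.ofReal ρ * bvNorm (opProd P 0 k f)
            + ENNReal.ofReal C * bvNorm (opProd P 0 k f) :=
              add_le_add_right (mul_le_mul_right (hnormle _) _) _
        _ = ENNReal.ofReal (ρ + C) * bvNorm (opProd P 0 k f) := by
              rw [ENNReal.ofReal_add hρ0.le hC.le, add_mul]
        _ ≤ ENNReal.ofReal s * bvNorm (opProd P 0 k f) :=
              mul_le_mul_left (ENNReal.ofReal_le_ofReal (by linarith)) _
        _ ≤ ENNReal.ofReal s * (ENNReal.ofReal (s ^ k) * bvNorm f) := mul_le_mul_right ih _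
        _ = ENNReal.ofReal (s ^ (k + 1)) * bvNorm f := by
              rw [← mul_assoc, ← ENNReal.ofReal_mul hs0, ← pow_succ']
  have gfin : ∀ k : ℕ, bvNorm (opProd P 0 k f) ≠ ⊤ := fun k =>
    ne_top_of_le_ne_top (ENNReal.mul_ne_top ENNReal.ofReal_ne_top hfin) (grow k)
  have growR : ∀ k : ℕ, k ≤ q → (bvNorm (opProd P 0 k f)).toReal ≤ M * b := by
    intro k hk
    have h1 := ENNReal.toReal_mono (ENNReal.mul_ne_top ENNReal.ofReal_ne_top hfin) (grow k)
    rw [ENNReal.toReal_mul, ENNReal.toReal_ofReal (pow_nonneg hs0 k)] at h1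
    have h2 : s ^ k ≤ M := pow_le_pow_right₀ hs1 hk
    calc (bvNorm (opProd P 0 k f)).toReal ≤ s ^ k * b := h1
      _ ≤ M * b := mul_le_mul_of_nonneg_right h2 hb0
  have tel : ∀ n : ℕ, n ≤ q → ‖opProd R 0 n f - opProd P 0 n f‖ ≤ n * (δ * (M * b)) := by
    intro n
    induction n with
    | zero => intro _; simp [opProd]
    | succ n ih =>
      intro hn
      have hn' : n ≤ q := Nat.le_of_succ_le hn
      have hmem := hR (0 + n + 1) (by omega) (by omega)
      have key : opProd R 0 (n + 1) f - opProd P 0 (n + 1) f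
          = R (0 + n + 1) (opProd R 0 n f - opProd P 0 n f)
            + (R (0 + n + 1) (opProd P 0 n f) - P (0 + n + 1) (opProd P 0 n f)) := by
        simp only [opProd, LinearMap.comp_apply, map_sub]
        abel
      rw [key]
      have h1 : ‖R (0 + n + 1) (opProd R 0 n f - opProd P 0 n f)‖ ≤ n * (δ * (M * b)) :=
        le_trans (hcontr _ hmem.1 _) (ih hn')
      have h2 : ‖R (0 + n + 1) (opProd P 0 n f) - P (0 + n + 1) (opProd P 0 n f)‖
          ≤ δ * (M * b) := by
        have hd := d1_bound (R (0 + n + 1)) (P (0 + n + 1)) (hcontr _ hmem.1)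
          (hcontr _ (hP _)) (opProd P 0 n f) (gfin n)
        have hd1 : d1 (R (0 + n + 1)) (P (0 + n + 1)) ≤ δ := le_of_lt hmem.2
        calc ‖R (0 + n + 1) (opProd P 0 n f) - P (0 + n + 1) (opProd P 0 n f)‖
            ≤ d1 (R (0 + n + 1)) (P (0 + n + 1)) * (bvNorm (opProd P 0 n f)).toReal := hd
          _ ≤ δ * (M * b) := mul_le_mul hd1 (growR n hn') ENNReal.toReal_nonneg hδ0.le
      refine le_trans (norm_add_le _ _) ?_
      have hexp : ((n + 1 : ℕ) : ℝ) * (δ * (M * b)) = n * (δ * (M * b)) + δ * (M * b) := by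
        push_cast; ring
      rw [hexp]
      exact add_le_add h1 h2
  have hdiff := tel q le_rfl
  have hPq : ‖opProd P 0 q f‖ ≤ ε / 2 * b := by
    have h1 : ENNReal.ofReal ‖opProd P 0 q f‖ ≤ ENNReal.ofReal (D * θ ^ q) * bvNorm f :=
      le_trans (hnormle _) (hmix 0 q hq1 f hf)
    have h2 := ENNReal.toReal_mono (ENNReal.mul_ne_top ENNReal.ofReal_ne_top hfin) h1
    rw [ENNReal.toReal_ofReal (norm_nonneg _), ENNReal.toReal_mul,
      ENNReal.toReal_ofReal (by positivity : (0:ℝ) ≤ D * θ ^ q)] at h2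
    calc ‖opProd P 0 q f‖ ≤ D * θ ^ q * b := h2
      _ ≤ ε / 2 * b := mul_le_mul_of_nonneg_right hθq hb0
  have hqδ : (q : ℝ) * (δ * (M * b)) = ε / 2 * b := by
    rw [hδdef]
    field_simp
  have hfinal : ‖opProd R 0 q f‖ ≤ ε * b := by
    have h3 : ‖opProd R 0 q f‖ ≤ ‖opProd R 0 q f - opProd P 0 q f‖ + ‖opProd P 0 q f‖ := by
      have := norm_add_le (opProd R 0 q f - opProd P 0 q f) (opProd P 0 q f)
      simpa using this
    rw [hqδ] at hdiff
    linarith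
  calc ENNReal.ofReal ‖opProd R 0 q f‖ ≤ ENNReal.ofReal (ε * b) :=
        ENNReal.ofReal_le_ofReal hfinal
    _ = ENNReal.ofReal ε * ENNReal.ofReal b := ENNReal.ofReal_mul hε.le
    _ = ENNReal.ofReal ε * bvNorm f := by rw [← hfb]


end DRW
end
end

section
/- Let {G_n}_{n≥1} be maps of 𝕋 such that each G_n is continuous everywhere except possibly at the two endpoints of an arc W_n, and on each continuity piece G_n is differentiable with |G_n′(x)| ≥ γ for a constant γ > 3. Then for every nondegenerate arc I ⊂ 𝕋 there exists N, with N = O(log(1/|I|)), such that (G_N ∘ G_{N−1} ∘ ⋯ ∘ G_1)(I) = 𝕋. More precisely, there are constants A, B depending only on γ such that one may take N ≤ A + B log(1/|I|). -/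
open MeasureTheory Set Filter
open scoped ENNReal NNReal

attribute [local instance] Classical.propDecidable

noncomputable section

namespace DRW

/-! ### Auxiliary lemmas for the covering property -/

private lemma coe_sub_int (x : ℝ) (k : ℤ) : ((x - (k : ℝ) : ℝ) : T1) = (x : T1) := by
  have h : (((k : ℝ) : ℝ) : T1) = 0 := by
    rw [AddCircle.coe_eq_zero_iff]
    exact ⟨k, by simp [zsmul_eq_mul]⟩
  have : ((x - (k : ℝ) : ℝ) : T1) = (x : T1) - (((k : ℝ) : ℝ) : T1) := rfl
  rw [this, h, sub_zero]

private lemma proj_Ioo_univ {c d : ℝ} (h : 1 < d - c) :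
    (fun x : ℝ => (x : T1)) '' Set.Ioo c d = Set.univ := by
  apply Set.eq_univ_of_univ_subset
  have h1 : Set.Ico (c + (d - c - 1) / 2) (c + (d - c - 1) / 2 + 1) ⊆ Set.Ioo c d := by
    intro x hx
    constructor
    · have := hx.1; linarith
    · have := hx.2; linarith
  calc (Set.univ : Set T1)
      = (fun x : ℝ => (x : T1)) '' Set.Ico (c + (d - c - 1) / 2) (c + (d - c - 1) / 2 + 1) :=
        (AddCircle.coe_image_Ico_eq _ _).symm
    _ ⊆ (fun x : ℝ => (x : T1)) '' Set.Ioo c d := Set.image_mono h1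

/-- Expansion: the image of an interval under a map with `|H'| ≥ γ` contains an
interval of length at least `γ` times the original one. -/
private lemma expand_image {γ : ℝ} (hγ : 0 < γ) {H : ℝ → ℝ} (hd : Differentiable ℝ H)
    (hlb : ∀ x, γ ≤ |deriv H x|) {u v : ℝ} (huv : u < v) :
    ∃ s t : ℝ, γ * (v - u) ≤ t - s ∧ Set.Ioo s t ⊆ H '' Set.Ioo u v := by
  have hne : ∀ x ∈ (Set.univ : Set ℝ), deriv H x ≠ 0 := by
    intro x _ hx
    have := hlb x
    rw [hx, abs_zero] at this
    linarith
  have hder : ∀ x ∈ (Set.univ : Set ℝ), HasDerivWithinAt H (deriv H x) Set.univ x :=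
    fun x _ => (hd x).hasDerivAt.hasDerivWithinAt
  have hcont : ContinuousOn H (Set.Icc u v) := hd.continuous.continuousOn
  rcases hasDerivWithinAt_forall_lt_or_forall_gt_of_forall_ne convex_univ hder hne
    with hneg | hpos
  · have hub : ∀ x, deriv H x ≤ -γ := by
      intro x
      have h1 := hlb x
      have h2 := hneg x (Set.mem_univ x)
      rcases abs_cases (deriv H x) with ⟨he, _⟩ | ⟨he, _⟩ <;> linarith
    have key := image_sub_le_mul_sub_of_deriv_le hd hub huv.le
    refine ⟨H v, H u, by linarith, ?_⟩
    exact intermediate_value_Ioo' huv.le hcont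
  · have hlb' : ∀ x, γ ≤ deriv H x := by
      intro x
      have h1 := hlb x
      have h2 := hpos x (Set.mem_univ x)
      rcases abs_cases (deriv H x) with ⟨he, _⟩ | ⟨he, _⟩ <;> linarith
    have key := mul_sub_le_image_sub_of_le_deriv hd hlb' huv.le
    refine ⟨H u, H v, by linarith, ?_⟩
    exact intermediate_value_Ioo huv.le hcont

private lemma not_cut {c x b : ℝ} (hx : c ≤ x) (hx1 : x < c + 1) (k : ℤ)
    (hne : x ≠ b + (⌈c - b⌉ : ℝ)) : x ≠ b + (k : ℝ) := by
  intro h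
  apply hne
  have hk : ⌈c - b⌉ = k := by
    rw [Int.ceil_eq_iff]
    constructor
    · have : b + (k : ℝ) < c + 1 := h ▸ hx1
      push_cast
      linarith
    · have : c ≤ b + (k : ℝ) := h ▸ hx
      linarith
  rw [h, hk]

/-- In an interval of length `≤ 1` one can find a subinterval of a third of the
length avoiding all points `a + k` and `a + l + k`, `k ∈ ℤ`. -/
private lemma exists_piece (a l : ℝ) {c d : ℝ} (hcd : c < d) (hlen : d - c ≤ 1) :
    ∃ u v : ℝ, c ≤ u ∧ v ≤ d ∧ (d - c) / 3 ≤ v - u ∧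
      ∀ x ∈ Set.Ioo u v, ∀ k : ℤ, x ≠ a + (k : ℝ) ∧ x ≠ a + l + (k : ℝ) := by
  set s₁ : ℝ := a + (⌈c - a⌉ : ℝ) with hs₁
  set s₂ : ℝ := (a + l) + (⌈c - (a + l)⌉ : ℝ) with hs₂
  have hs₁c : c ≤ s₁ := by have := Int.le_ceil (c - a); simp only [hs₁]; linarith
  have hs₂c : c ≤ s₂ := by have := Int.le_ceil (c - (a + l)); simp only [hs₂]; linarith
  set p : ℝ := min s₁ s₂ with hp
  set q : ℝ := max s₁ s₂ with hq
  set p' : ℝ := min p d with hp'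
  set q' : ℝ := min q d with hq'
  have hcp : c ≤ p := le_min hs₁c hs₂c
  have hcp' : c ≤ p' := le_min hcp hcd.le
  have hq'd : q' ≤ d := min_le_right _ _
  have hp'q' : p' ≤ q' := min_le_min (min_le_max) le_rfl
  have havoid : ∀ x, c < x → x < d → x ≠ s₁ → x ≠ s₂ →
      ∀ k : ℤ, x ≠ a + (k : ℝ) ∧ x ≠ a + l + (k : ℝ) := by
    intro x hcx hxd h1 h2 k
    have hx1 : x < c + 1 := by linarith
    constructor
    · exact not_cut hcx.le hx1 k h1
    · have h2' : x ≠ (a + l) + (⌈c - (a + l)⌉ : ℝ) := h2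
      have := not_cut (b := a + l) hcx.le hx1 k h2'
      intro hcon
      exact this (by linarith)
  rcases le_total ((d - c) / 3) (p' - c) with h1 | h1
  · refine ⟨c, p', le_rfl, min_le_right _ _, by linarith, ?_⟩
    intro x hx k
    have hxp : x < p' := hx.2
    have hxs₁ : x < s₁ := lt_of_lt_of_le hxp ((min_le_left p d).trans (min_le_left _ _))
    have hxs₂ : x < s₂ := lt_of_lt_of_le hxp ((min_le_left p d).trans (min_le_right _ _))
    exact havoid x hx.1 (lt_of_lt_of_le hxp (min_le_right _ _)) hxs₁.ne hxs₂.ne k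
  rcases le_total ((d - c) / 3) (q' - p') with h2 | h2
  · refine ⟨p', q', hcp', hq'd, by linarith, ?_⟩
    intro x hx k
    have hp'lt : p' < q' := lt_of_lt_of_le (by linarith : p' < p' + (d - c) / 3) (by linarith)
    have hpd : p ≤ d := by
      by_contra hh
      push_neg at hh
      have : p' = d := min_eq_right hh.le
      exact absurd (lt_of_lt_of_le hp'lt hq'd) (by rw [this]; exact lt_irrefl d)
    have hp'p : p' = p := min_eq_left hpd
    have hxgp : p < x := hp'p ▸ hx.1
    have hxltq : x < q := lt_of_lt_of_le hx.2 (min_le_left _ _)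
    have hxd : x < d := lt_of_lt_of_le hx.2 (min_le_right _ _)
    have hcx : c < x := lt_of_le_of_lt hcp hxgp
    have hxs₁ : x ≠ s₁ := by
      rcases le_total s₁ s₂ with hh | hh
      · have : p = s₁ := min_eq_left hh
        exact (this ▸ hxgp).ne'
      · have : q = s₁ := max_eq_left hh
        exact (this ▸ hxltq).ne
    have hxs₂ : x ≠ s₂ := by
      rcases le_total s₁ s₂ with hh | hh
      · have : q = s₂ := max_eq_right hh
        exact (this ▸ hxltq).ne
      · have : p = s₂ := min_eq_right hh
        exact (this ▸ hxgp).ne'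
    exact havoid x hcx hxd hxs₁ hxs₂ k
  · refine ⟨q', d, le_trans hcp' hp'q', le_rfl, by linarith, ?_⟩
    intro x hx k
    have hq'q : q' < x := hx.1
    have hqd : q ≤ d := by
      by_contra hh
      push_neg at hh
      have : q' = d := min_eq_right hh.le
      exact absurd (this ▸ hq'q) (not_lt.mpr hx.2.le)
    have hq'eq : q' = q := min_eq_left hqd
    have hxgq : q < x := hq'eq ▸ hq'q
    have hxs₁ : x ≠ s₁ := (lt_of_le_of_lt (le_max_left s₁ s₂) hxgq).ne'
    have hxs₂ : x ≠ s₂ := (lt_of_le_of_lt (le_max_right s₁ s₂) hxgq).ne'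
    exact havoid x (lt_of_le_of_lt (le_trans hcp' hp'q') hq'q) hx.2 hxs₁ hxs₂ k

/-- An interval avoiding all cut points lies in a single branch domain mod `ℤ`. -/
private lemma exists_branch (a l : ℝ) (hl : 0 < l) (hl1 : l ≤ 1) {u v : ℝ} (huv : u < v)
    (hlen : v - u ≤ 1)
    (havoid : ∀ x ∈ Set.Ioo u v, ∀ k : ℤ, x ≠ a + (k : ℝ) ∧ x ≠ a + l + (k : ℝ)) :
    ∃ k : ℤ, (∀ x ∈ Set.Ioo u v, x - (k : ℝ) ∈ Set.Ioo a (a + l)) ∨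
             (∀ x ∈ Set.Ioo u v, x - (k : ℝ) ∈ Set.Ioo (a + l) (a + 1)) := by
  set k : ℤ := ⌊u - a⌋ with hk
  have hku : a + (k : ℝ) ≤ u := by
    have := Int.floor_le (u - a); simp only [hk]; linarith
  have hvk : v ≤ a + (k : ℝ) + 1 := by
    by_contra h
    push_neg at h
    have hmem : a + ((k + 1 : ℤ) : ℝ) ∈ Set.Ioo u v := by
      constructor
      · have := Int.lt_floor_add_one (u - a); push_cast; simp only [hk] at *; linarith
      · push_cast; linarith
    exact (havoid _ hmem (k + 1)).1 rfl
  rcases le_or_gt v (a + l + (k : ℝ)) with hc | hc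
  · refine ⟨k, Or.inl ?_⟩
    intro x hx
    constructor
    · have := lt_of_le_of_lt hku hx.1; linarith
    · have := lt_of_lt_of_le hx.2 hc; linarith
  · have hu : a + l + (k : ℝ) ≤ u := by
      by_contra h
      push_neg at h
      exact (havoid _ ⟨h, hc⟩ k).2 rfl
    refine ⟨k, Or.inr ?_⟩
    intro x hx
    constructor
    · have := lt_of_le_of_lt hu hx.1; linarith
    · have := lt_of_lt_of_le hx.2 hvk; linarith

/-- covering property: an arc `I` covers the whole circle
after `N = O(log(1/|I|))` iterations of the expanding maps `G_n`. -/
theorem arc_covers_circle (γ : ℝ) (h3 : 3 < γ) :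
    ∃ A B : ℝ, ∀ (G : ℕ → T1 → T1) (W : ℕ → Set T1) (a l : ℕ → ℝ),
      (∀ n, IsArc (W n) (a n) (l n)) →
      (∀ n, PiecewiseExpandingArcLB (G n) (a n) (l n) γ) →
      ∀ (I : Set T1) (aI lI : ℝ), IsArc I aI lI →
      ∃ N : ℕ, (N : ℝ) ≤ A + B * Real.log (1 / lI) ∧
        compSeq G N '' I = Set.univ := by
  have hγ0 : (0 : ℝ) < γ := by linarith
  have hρ : (1 : ℝ) < γ / 3 := by linarith
  have hρ0 : (0 : ℝ) < γ / 3 := by linarith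
  have hlog : 0 < Real.log (γ / 3) := Real.log_pos hρ
  refine ⟨1, 1 / Real.log (γ / 3), ?_⟩
  intro G W a l hW hG I aI lI hI
  obtain ⟨hlI0, hlI1, hIeq⟩ := hI
  -- Key induction: either the image has covered the circle already, or it
  -- contains the projection of an interval of length `(γ/3)^n · lI`.
  have key : ∀ n : ℕ, (∃ N : ℕ, N ≤ n ∧ compSeq G N '' I = Set.univ) ∨
      ∃ c d : ℝ, c < d ∧ (γ / 3) ^ n * lI ≤ d - c ∧
        (fun x : ℝ => (x : T1)) '' Set.Ioo c d ⊆ compSeq G n '' I := by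
    intro n
    induction n with
    | zero =>
      right
      refine ⟨aI, aI + lI, by linarith, by simp, ?_⟩
      have : (fun x : ℝ => (x : T1)) '' Set.Ioo aI (aI + lI) ⊆
          (fun x : ℝ => (x : T1)) '' Set.Ico aI (aI + lI) :=
        Set.image_mono Set.Ioo_subset_Ico_self
      simpa [compSeq, hIeq] using this
    | succ n ih =>
      rcases ih with ⟨N, hN, hU⟩ | ⟨c, d, hcd, hlow, hsub⟩
      · exact Or.inl ⟨N, hN.trans (Nat.le_succ n), hU⟩
      rcases le_or_gt (d - c) 1 with hle | hgt
      · -- the interval has length ≤ 1 : apply one more expanding map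
        obtain ⟨hln0, hln1, -⟩ := hW (n + 1)
        obtain ⟨u, v, hcu, hvd, hlen3, havoid⟩ := exists_piece (a (n + 1)) (l (n + 1)) hcd hle
        have huv : u < v := by
          have : 0 < (d - c) / 3 := by linarith
          linarith
        have hlenuv : v - u ≤ 1 := by linarith
        obtain ⟨k, hbranch⟩ := exists_branch (a (n + 1)) (l (n + 1)) hln0 hln1 huv hlenuv havoid
        obtain ⟨F₁, F₂, hF₁d, hF₂d, hF₁lb, hF₂lb, hF₁eq, hF₂eq⟩ := hG (n + 1)
        -- choose the branch lift `H`
        obtain ⟨H, hHd, hHlb, hagree⟩ :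
            ∃ H : ℝ → ℝ, Differentiable ℝ H ∧ (∀ x, γ ≤ |deriv H x|) ∧
              ∀ x ∈ Set.Ioo u v, G (n + 1) ((x : ℝ) : T1) = ((H x : ℝ) : T1) := by
          rcases hbranch with hb | hb
          · refine ⟨fun x => F₁ (x - (k : ℝ)), hF₁d.comp (differentiable_id.sub_const _),
              ?_, ?_⟩
            · intro x
              have : deriv (fun x => F₁ (x - (k : ℝ))) x = deriv F₁ (x - (k : ℝ)) :=
                deriv_comp_sub_const _ _ _
              rw [this]; exact hF₁lb _
            · intro x hx
              have h1 : ((x : ℝ) : T1) = ((x - (k : ℝ) : ℝ) : T1) := (coe_sub_int x k).symm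
              rw [h1]
              exact hF₁eq _ (hb x hx)
          · refine ⟨fun x => F₂ (x - (k : ℝ)), hF₂d.comp (differentiable_id.sub_const _),
              ?_, ?_⟩
            · intro x
              have : deriv (fun x => F₂ (x - (k : ℝ))) x = deriv F₂ (x - (k : ℝ)) :=
                deriv_comp_sub_const _ _ _
              rw [this]; exact hF₂lb _
            · intro x hx
              have h1 : ((x : ℝ) : T1) = ((x - (k : ℝ) : ℝ) : T1) := (coe_sub_int x k).symm
              rw [h1]
              exact hF₂eq _ (hb x hx)
        obtain ⟨s, t, hst, himg⟩ := expand_image hγ0 hHd hHlb huv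
        right
        refine ⟨s, t, ?_, ?_, ?_⟩
        · have : 0 < γ * (v - u) := mul_pos hγ0 (by linarith)
          linarith
        · have h1 : (γ / 3) ^ (n + 1) * lI = (γ / 3) * ((γ / 3) ^ n * lI) := by ring
          have h2 : (γ / 3) * ((γ / 3) ^ n * lI) ≤ (γ / 3) * (d - c) :=
            mul_le_mul_of_nonneg_left hlow hρ0.le
          have h3 : (γ / 3) * (d - c) ≤ γ * (v - u) := by
            have := mul_le_mul_of_nonneg_left hlen3 hγ0.le
            calc (γ / 3) * (d - c) = γ * ((d - c) / 3) := by ring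
              _ ≤ γ * (v - u) := this
          linarith
        · rintro z ⟨y0, hy0, rfl⟩
          obtain ⟨y, hy, hyz⟩ := himg hy0
          have hmem : ((y : ℝ) : T1) ∈ compSeq G n '' I :=
            hsub ⟨y, ⟨lt_of_le_of_lt hcu hy.1, lt_of_lt_of_le hy.2 hvd⟩, rfl⟩
          obtain ⟨w, hw, hwy⟩ := hmem
          have : compSeq G (n + 1) w = ((y0 : ℝ) : T1) := by
            show (G (n + 1) ∘ compSeq G n) w = ((y0 : ℝ) : T1)
            simp only [Function.comp_apply, hwy]
            rw [hagree y hy, hyz]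
          exact ⟨w, hw, this⟩
      · -- the interval has length > 1 : we already cover the circle
        left
        refine ⟨n, Nat.le_succ n, ?_⟩
        apply Set.eq_univ_of_univ_subset
        rw [← proj_Ioo_univ hgt]
        exact hsub
  -- choose `n` so that `(γ/3)^n · lI > 1`
  set x : ℝ := Real.log (1 / lI) / Real.log (γ / 3) with hxdef
  have hx0 : 0 ≤ x := div_nonneg (Real.log_nonneg (one_le_one_div hlI0 hlI1)) hlog.le
  set n : ℕ := ⌊x⌋.toNat + 1 with hndef
  have hnx : x < (n : ℝ) := by
    have h1 : (⌊x⌋ : ℝ) ≤ (⌊x⌋.toNat : ℝ) := by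
      have : ⌊x⌋ ≤ (⌊x⌋.toNat : ℤ) := Int.self_le_toNat _
      exact_mod_cast this
    have h2 := Int.lt_floor_add_one x
    have : (n : ℝ) = (⌊x⌋.toNat : ℝ) + 1 := by push_cast [hndef]; ring
    rw [this]; linarith
  have hnle : (n : ℝ) ≤ 1 + 1 / Real.log (γ / 3) * Real.log (1 / lI) := by
    have h1 : (⌊x⌋.toNat : ℝ) ≤ x := by
      have h0 : (0 : ℤ) ≤ ⌊x⌋ := Int.floor_nonneg.mpr hx0
      have : ((⌊x⌋.toNat : ℤ) : ℝ) = (⌊x⌋ : ℝ) := by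
        rw [Int.toNat_of_nonneg h0]
      have h2 := Int.floor_le x
      calc (⌊x⌋.toNat : ℝ) = ((⌊x⌋.toNat : ℤ) : ℝ) := by push_cast; ring
        _ = (⌊x⌋ : ℝ) := this
        _ ≤ x := h2
    have : (n : ℝ) = (⌊x⌋.toNat : ℝ) + 1 := by push_cast [hndef]; ring
    rw [this, hxdef] at *
    have : Real.log (1 / lI) / Real.log (γ / 3) =
        1 / Real.log (γ / 3) * Real.log (1 / lI) := by ring
    linarith [h1, this ▸ h1]
  have hρn : 1 < (γ / 3) ^ n * lI := by
    have hpow : 1 / lI < (γ / 3) ^ n := by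
      rw [← Real.log_lt_log_iff (by positivity) (by positivity)]
      rw [Real.log_pow]
      have : Real.log (1 / lI) = x * Real.log (γ / 3) := by
        rw [hxdef]; field_simp
      rw [this]
      exact mul_lt_mul_of_pos_right hnx hlog
    rw [div_lt_iff₀ hlI0] at hpow
    linarith
  rcases key n with ⟨N, hNn, hU⟩ | ⟨c, d, hcd, hlow, hsub⟩
  · refine ⟨N, ?_, hU⟩
    have : (N : ℝ) ≤ (n : ℝ) := by exact_mod_cast hNn
    linarith
  · refine ⟨n, by linarith, ?_⟩
    have hgt : 1 < d - c := lt_of_lt_of_le hρn hlow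
    apply Set.eq_univ_of_univ_subset
    rw [← proj_Ioo_univ hgt]
    exact hsub

end DRW
end
end

section
/- Let {T_n}_{n≥1} be C^{1+Lip} maps of 𝕋 with 3 < γ ≤ |T_n′(x)| ≤ K for all x and Lip(T_n′) ≤ K₁. Write T_{1,n} = T_n ∘ ⋯ ∘ T_1 and let 𝒜_n = (T_{1,n})^{−1}(ℬ) be the pullback of the Borel σ-algebra ℬ of 𝕋, and 𝒜_∞ = ∩_{n≥1} 𝒜_n the tail σ-algebra. Then 𝒜_∞ is trivial for Lebesgue measure: every A ∈ 𝒜_∞ has Lebesgue measure 0 or 1. -/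
open MeasureTheory Set Filter
open scoped ENNReal NNReal

attribute [local instance] Classical.propDecidable

noncomputable section

namespace DRW

section Aux

open Topology



/-- Sign constancy for a continuous nonvanishing function. -/
lemma sign_const' {g : ℝ → ℝ} (hg : Continuous g) {c : ℝ} (hc : 0 < c)
    (h : ∀ x, c ≤ |g x|) : (∀ x, c ≤ g x) ∨ (∀ x, g x ≤ -c) := by
  have key : ∀ x y : ℝ, c ≤ g x → g y ≤ -c → False := by
    intro x y hx hy
    have h0 : (0:ℝ) ∈ Set.uIcc (g x) (g y) := by
      rw [Set.mem_uIcc]; right; constructor <;> linarith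
    obtain ⟨z, _, hz⟩ := intermediate_value_uIcc hg.continuousOn h0
    have := h z; rw [hz] at this; simp only [abs_zero] at this; linarith
  rcases le_abs.1 (h 0) with h0 | h0
  · left; intro x
    rcases le_abs.1 (h x) with h1 | h1
    · exact h1
    · exact absurd (key 0 x h0 (by linarith)) not_false
  · right; intro x
    rcases le_abs.1 (h x) with h1 | h1
    · exact absurd (key x 0 h1 (by linarith)) not_false
    · linarith

/-- Expansion from derivative lower bound (positive case). -/
lemma expand_of_deriv_ge {F : ℝ → ℝ} (hF : Differentiable ℝ F) {γ : ℝ}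
    (hγ : 0 ≤ γ) (h : ∀ x, γ ≤ deriv F x) (u v : ℝ) :
    γ * |u - v| ≤ |F u - F v| := by
  wlog huv : v ≤ u generalizing u v
  · have := this v u (le_of_not_ge huv)
    rwa [abs_sub_comm, abs_sub_comm (F v)] at this
  have mono : Monotone (fun x => F x - γ * x) := by
    apply monotone_of_deriv_nonneg
    · exact hF.sub (differentiable_id.const_mul γ)
    · intro x
      have hd : HasDerivAt (fun x => F x - γ * x) (deriv F x - γ) x := by
        exact (((hF x).hasDerivAt).sub ((hasDerivAt_id x).const_mul γ)).congr_deriv (by simp)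
      rw [hd.deriv]; linarith [h x]
  have h1 : F v - γ * v ≤ F u - γ * u := mono huv
  rw [abs_of_nonneg (by linarith : (0:ℝ) ≤ u - v)]
  calc γ * (u - v) ≤ F u - F v := by nlinarith
    _ ≤ |F u - F v| := le_abs_self _

/-- Expansion from |derivative| lower bound. -/
lemma expand_of_abs_deriv_ge {F : ℝ → ℝ} (hF : Differentiable ℝ F)
    (hF' : Continuous (deriv F)) {γ : ℝ} (hγ : 0 < γ) (h : ∀ x, γ ≤ |deriv F x|)
    (u v : ℝ) : γ * |u - v| ≤ |F u - F v| := by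
  rcases sign_const' hF' hγ h with hp | hn
  · exact expand_of_deriv_ge hF hγ.le hp u v
  · have := expand_of_deriv_ge (F := fun x => -F x) hF.neg hγ.le
      (fun x => by rw [deriv.fun_neg]; linarith [hn x]) u v
    rwa [show -F u - -F v = -(F u - F v) by ring, abs_neg] at this

lemma density_tendsto_zero {E : Set ℝ} (hE : MeasurableSet E) {x : ℝ}
    (h : Tendsto (fun r => volume (E ∩ Metric.closedBall x r) / volume (Metric.closedBall x r))
      (𝓝[>] 0) (𝓝 1)) :
    Tendsto (fun r => volume (Metric.closedBall x r \ E) / volume (Metric.closedBall x r))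
      (𝓝[>] 0) (𝓝 0) := by
  have heq : ∀ᶠ r in 𝓝[>] (0:ℝ),
      volume (Metric.closedBall x r \ E) / volume (Metric.closedBall x r) =
        1 - volume (E ∩ Metric.closedBall x r) / volume (Metric.closedBall x r) := by
    filter_upwards [self_mem_nhdsWithin] with r hr
    have hrpos : (0:ℝ) < r := hr
    have hfin : volume (Metric.closedBall x r) ≠ ⊤ := by
      rw [Real.volume_closedBall]; exact ENNReal.ofReal_ne_top
    have hne : volume (Metric.closedBall x r) ≠ 0 := by
      rw [Real.volume_closedBall]
      simp only [ne_eq, ENNReal.ofReal_eq_zero, not_le]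
      linarith
    have hadd : volume (Metric.closedBall x r ∩ E) + volume (Metric.closedBall x r \ E) =
        volume (Metric.closedBall x r) := measure_inter_add_diff _ hE
    have hsum : volume (E ∩ Metric.closedBall x r) / volume (Metric.closedBall x r) +
        volume (Metric.closedBall x r \ E) / volume (Metric.closedBall x r) = 1 := by
      rw [ENNReal.div_add_div_same, Set.inter_comm, hadd, ENNReal.div_self hne hfin]
    have hqne : volume (E ∩ Metric.closedBall x r) / volume (Metric.closedBall x r) ≠ ⊤ := by
      intro hcon
      rw [hcon] at hsum
      simp at hsum
    rw [add_comm] at hsum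
    exact ENNReal.eq_sub_of_add_eq hqne hsum
  have hlim : Tendsto (fun r =>
      1 - volume (E ∩ Metric.closedBall x r) / volume (Metric.closedBall x r))
      (𝓝[>] (0:ℝ)) (𝓝 0) := by
    have := ENNReal.Tendsto.sub (tendsto_const_nhds (x := (1:ℝ≥0∞))) h (Or.inl ENNReal.one_ne_top)
    simpa using this
  exact hlim.congr' (heq.mono fun r hr => hr.symm)


lemma branch_exists {Φ : ℝ → ℝ} (hΦ : Differentiable ℝ Φ) (hc' : Continuous (deriv Φ))
    {g : ℝ} (hg : 1 ≤ g) (hlb : ∀ x, g ≤ |deriv Φ x|)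
    (hexp : ∀ u v, g * |u - v| ≤ |Φ u - Φ v|) (x₀ : ℝ) :
    ∃ (u v : ℝ) (m : ℤ), u ≤ x₀ ∧ x₀ ≤ v ∧ 0 < v - u ∧ v - u ≤ 1 / g ∧
      Φ '' Set.Icc u v = Set.Icc (m : ℝ) (m + 1) := by
  have hg0 : (0:ℝ) < g := lt_of_lt_of_le one_pos hg
  set m : ℤ := ⌊Φ x₀⌋ with hm
  have hm1 : (m:ℝ) ≤ Φ x₀ := Int.floor_le _
  have hm2 : Φ x₀ < m + 1 := Int.lt_floor_add_one _
  have hgap : ∀ a : ℝ, g ≤ |Φ (a + 1) - Φ a| := by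
    intro a
    have := hexp (a + 1) a
    simpa using this
  rcases sign_const' hc' hg0 hlb with hp | hn
  · -- increasing case
    have mono : Monotone Φ :=
      monotone_of_deriv_nonneg hΦ (fun x => by linarith [hp x])
    have h1 : Φ (x₀ - 1) ≤ m := by
      have e := hgap (x₀ - 1)
      rw [show x₀ - 1 + 1 = x₀ by ring] at e
      have h2 : Φ (x₀ - 1) ≤ Φ x₀ := mono (by linarith)
      rw [abs_of_nonneg (by linarith)] at e
      linarith
    have h2 : (m:ℝ) + 1 ≤ Φ (x₀ + 1) := by
      have e := hgap x₀
      have h3 : Φ x₀ ≤ Φ (x₀ + 1) := mono (by linarith)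
      rw [abs_of_nonneg (by linarith)] at e
      linarith
    obtain ⟨u, humem, hu⟩ := intermediate_value_Icc (by linarith : x₀ - 1 ≤ x₀)
      hΦ.continuous.continuousOn (Set.mem_Icc.2 ⟨h1, hm1⟩)
    obtain ⟨v, hvmem, hv⟩ := intermediate_value_Icc (by linarith : x₀ ≤ x₀ + 1)
      hΦ.continuous.continuousOn (Set.mem_Icc.2 ⟨hm2.le, h2⟩)
    have huv : u < v := by
      by_contra hle
      push_neg at hle
      have := mono hle
      rw [hu, hv] at this
      linarith
    refine ⟨u, v, m, humem.2, hvmem.1, by linarith, ?_, ?_⟩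
    · have e := hexp v u
      rw [hu, hv, show (m:ℝ) + 1 - m = 1 by ring] at e
      rw [abs_of_nonneg (by linarith)] at e
      rw [abs_of_pos (by norm_num : (0:ℝ) < 1)] at e
      rw [le_div_iff₀ hg0]
      linarith [e]
    · apply Set.Subset.antisymm
      · rintro w ⟨x, hx, rfl⟩
        rcases Set.mem_Icc.1 hx with ⟨hx1, hx2⟩
        exact Set.mem_Icc.2 ⟨hu ▸ mono hx1, hv ▸ mono hx2⟩
      · have := intermediate_value_Icc huv.le hΦ.continuous.continuousOn
        rwa [hu, hv] at this
  · -- decreasing case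
    have mono : Antitone Φ :=
      antitone_of_deriv_nonpos hΦ (fun x => by linarith [hn x])
    have h1 : (m:ℝ) + 1 ≤ Φ (x₀ - 1) := by
      have e := hgap (x₀ - 1)
      rw [show x₀ - 1 + 1 = x₀ by ring] at e
      have h2 : Φ x₀ ≤ Φ (x₀ - 1) := mono (by linarith)
      rw [abs_of_nonpos (by linarith)] at e
      linarith
    have h2 : Φ (x₀ + 1) ≤ m := by
      have e := hgap x₀
      have h3 : Φ (x₀ + 1) ≤ Φ x₀ := mono (by linarith)
      rw [abs_of_nonpos (by linarith)] at e
      linarith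
    obtain ⟨u, humem, hu⟩ := intermediate_value_Icc' (by linarith : x₀ - 1 ≤ x₀)
      hΦ.continuous.continuousOn (Set.mem_Icc.2 ⟨hm2.le, h1⟩)
    obtain ⟨v, hvmem, hv⟩ := intermediate_value_Icc' (by linarith : x₀ ≤ x₀ + 1)
      hΦ.continuous.continuousOn (Set.mem_Icc.2 ⟨h2, hm1⟩)
    -- here Φ u = m + 1, Φ v = m
    have huv : u < v := by
      by_contra hle
      push_neg at hle
      have := mono hle
      rw [hu, hv] at this
      linarith
    refine ⟨u, v, m, humem.2, hvmem.1, by linarith, ?_, ?_⟩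
    · have e := hexp v u
      rw [hu, hv] at e
      rw [abs_of_nonneg (by linarith), abs_of_nonpos (by linarith : (m:ℝ) - (m+1) ≤ 0)] at e
      rw [le_div_iff₀ hg0]
      linarith [e]
    · apply Set.Subset.antisymm
      · rintro w ⟨x, hx, rfl⟩
        rcases Set.mem_Icc.1 hx with ⟨hx1, hx2⟩
        exact Set.mem_Icc.2 ⟨hv ▸ mono hx2, hu ▸ mono hx1⟩
      · have := intermediate_value_Icc' huv.le hΦ.continuous.continuousOn
        rw [hu, hv] at this
        exact this


lemma measure_image_eq_lintegral_abs_deriv {s : Set ℝ} {f : ℝ → ℝ} (hs : MeasurableSet s)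
    (hf : Differentiable ℝ f) (hinj : Function.Injective f) :
    volume (f '' s) = ∫⁻ x in s, ENNReal.ofReal |deriv f x| := by
  have h := lintegral_abs_det_fderiv_eq_addHaar_image (volume : Measure ℝ) hs
    (f' := fun x => (1 : ℝ →L[ℝ] ℝ).smulRight (deriv f x))
    (fun x _ => ((hf x).hasDerivAt.hasFDerivAt).hasFDerivWithinAt) (hinj.injOn)
  simpa only [ContinuousLinearMap.smulRight_one_eq_toSpanSingleton, ContinuousLinearMap.det_toSpanSingleton] using h.symm


lemma comp_lift_exists {γ K K₁ : ℝ} (h3 : 3 < γ) (hK₁ : 0 ≤ K₁)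
    (T : ℕ → T1 → T1) (hT : ∀ n, ExpandingC1Lip (T n) γ K K₁) (n : ℕ) :
    ∃ Φ : ℝ → ℝ, Differentiable ℝ Φ ∧ Continuous (deriv Φ) ∧
      (∀ x : ℝ, compSeq T n ((x : ℝ) : T1) = ((Φ x : ℝ) : T1)) ∧
      (∀ x, γ ^ n ≤ |deriv Φ x|) ∧
      (∀ u v, γ ^ n * |u - v| ≤ |Φ u - Φ v|) ∧
      (∀ t, 0 ≤ t → t ≤ 1 → ∀ x y, |Φ x - Φ y| ≤ t →
        |deriv Φ x| ≤ Real.exp (K₁ / (γ * (γ - 1)) * t) * |deriv Φ y|) := by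
  have hγ0 : (0:ℝ) < γ := by linarith
  have hγ1 : (0:ℝ) < γ - 1 := by linarith
  set c := K₁ / (γ * (γ - 1)) with hc
  have hc0 : 0 ≤ c := div_nonneg hK₁ (by nlinarith)
  induction n with
  | zero =>
    refine ⟨fun x => x, differentiable_id, ?_, fun x => rfl, ?_, ?_, ?_⟩
    · rw [deriv_id'']; exact continuous_const
    · intro x
      simp only [deriv_id'', pow_zero, abs_one, le_refl, Pi.one_apply]
    · intro u v
      simp only [pow_zero, one_mul]; exact le_refl _
    · intro t ht0 ht1 x y _
      simp only [deriv_id'', abs_one, mul_one, Pi.one_apply]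
      exact Real.one_le_exp (by positivity)
  | succ n ih =>
    obtain ⟨Φ, hdiff, hcont', hlift, hlb, hexp, hdist⟩ := ih
    obtain ⟨F, hFlift, hFdiff, hFbnd, hFlip⟩ := hT (n + 1)
    have hFcont' : Continuous (deriv F) := hFlip.continuous
    have hFlb : ∀ x, γ ≤ |deriv F x| := fun x => (hFbnd x).1
    have hFexp : ∀ u v, γ * |u - v| ≤ |F u - F v| :=
      expand_of_abs_deriv_ge hFdiff hFcont' hγ0 hFlb
    have hFlipR : ∀ u v, |deriv F u - deriv F v| ≤ K₁ * |u - v| := by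
      intro u v
      have := hFlip.dist_le_mul u v
      rwa [Real.dist_eq, Real.dist_eq, Real.coe_toNNReal K₁ hK₁] at this
    have hderiv : ∀ x, deriv (F ∘ Φ) x = deriv F (Φ x) * deriv Φ x := fun x =>
      deriv_comp x (hFdiff _) (hdiff _)
    refine ⟨F ∘ Φ, hFdiff.comp hdiff, ?_, ?_, ?_, ?_, ?_⟩
    · have : deriv (F ∘ Φ) = fun x => deriv F (Φ x) * deriv Φ x := funext hderiv
      rw [this]
      exact (hFcont'.comp hdiff.continuous).mul hcont'
    · intro x
      show T (n+1) (compSeq T n ((x:ℝ) : T1)) = _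
      rw [hlift x]
      exact hFlift (Φ x)
    · intro x
      rw [hderiv x, abs_mul, pow_succ]
      have h1 : (0:ℝ) ≤ γ ^ n := by positivity
      calc γ ^ n * γ ≤ |deriv Φ x| * |deriv F (Φ x)| :=
            mul_le_mul (hlb x) (hFlb (Φ x)) hγ0.le (abs_nonneg _)
        _ = |deriv F (Φ x)| * |deriv Φ x| := mul_comm _ _
    · intro u v
      have h1 := hexp u v
      have h2 := hFexp (Φ u) (Φ v)
      calc γ ^ (n+1) * |u - v| = γ * (γ ^ n * |u - v|) := by ring
        _ ≤ γ * |Φ u - Φ v| := by nlinarith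
        _ ≤ |F (Φ u) - F (Φ v)| := h2
    · intro t ht0 ht1 x y h
      have h1 : |Φ x - Φ y| ≤ t / γ := by
        have h2 := hFexp (Φ x) (Φ y)
        rw [le_div_iff₀ hγ0]
        have : (F ∘ Φ) x - (F ∘ Φ) y = F (Φ x) - F (Φ y) := rfl
        rw [this] at h
        nlinarith
      have ht0' : 0 ≤ t / γ := div_nonneg ht0 hγ0.le
      have ht1' : t / γ ≤ 1 := by rw [div_le_one hγ0]; linarith
      have IH := hdist (t / γ) ht0' ht1' x y h1
      have hy' : γ ≤ |deriv F (Φ y)| := hFlb _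
      have hF'bnd : |deriv F (Φ x)| ≤ Real.exp (K₁ * t / γ ^ 2) * |deriv F (Φ y)| := by
        have hlipxy := hFlipR (Φ x) (Φ y)
        have hstep : |deriv F (Φ x)| ≤ |deriv F (Φ y)| + K₁ * (t / γ) := by
          have habs := abs_sub_abs_le_abs_sub (deriv F (Φ x)) (deriv F (Φ y))
          have : K₁ * |Φ x - Φ y| ≤ K₁ * (t / γ) := by nlinarith
          linarith
        have factor : |deriv F (Φ y)| + K₁ * (t / γ) ≤
            (1 + K₁ * t / γ ^ 2) * |deriv F (Φ y)| := by
          have hKt : 0 ≤ K₁ * t := mul_nonneg hK₁ ht0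
          have : K₁ * (t / γ) ≤ (K₁ * t / γ ^ 2) * |deriv F (Φ y)| := by
            have e1 : K₁ * (t / γ) = K₁ * t * γ / γ ^ 2 := by field_simp
            have e2 : (K₁ * t / γ ^ 2) * |deriv F (Φ y)| = K₁ * t * |deriv F (Φ y)| / γ ^ 2 := by
              ring
            rw [e1, e2]
            gcongr
          nlinarith
        have hexp1 : (1 + K₁ * t / γ ^ 2) ≤ Real.exp (K₁ * t / γ ^ 2) := by
          linarith [Real.add_one_le_exp (K₁ * t / γ ^ 2)]
        calc |deriv F (Φ x)| ≤ (1 + K₁ * t / γ ^ 2) * |deriv F (Φ y)| := by linarith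
          _ ≤ Real.exp (K₁ * t / γ ^ 2) * |deriv F (Φ y)| :=
              mul_le_mul_of_nonneg_right hexp1 (abs_nonneg _)
      rw [hderiv x, hderiv y, abs_mul, abs_mul]
      have hcomb : |deriv F (Φ x)| * |deriv Φ x| ≤
          (Real.exp (K₁ * t / γ ^ 2) * |deriv F (Φ y)|) *
            (Real.exp (c * (t / γ)) * |deriv Φ y|) :=
        mul_le_mul hF'bnd IH (abs_nonneg _) (by positivity)
      refine le_trans hcomb (le_of_eq ?_)
      have harg : K₁ * t / γ ^ 2 + c * (t / γ) = c * t := by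
        rw [hc]; field_simp; ring
      rw [show (Real.exp (K₁ * t / γ ^ 2) * |deriv F (Φ y)|) *
            (Real.exp (c * (t / γ)) * |deriv Φ y|) =
          (Real.exp (K₁ * t / γ ^ 2) * Real.exp (c * (t / γ))) *
            (|deriv F (Φ y)| * |deriv Φ y|) by ring, ← Real.exp_add, harg]


lemma core_bound {Φ : ℝ → ℝ} (hΦ : Differentiable ℝ Φ) (hc' : Continuous (deriv Φ))
    {g D : ℝ} (hg : 1 ≤ g) (hD : 0 < D)
    (hlb : ∀ x, g ≤ |deriv Φ x|)
    (hexp : ∀ u v, g * |u - v| ≤ |Φ u - Φ v|)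
    (hdist : ∀ x y, |Φ x - Φ y| ≤ 1 → |deriv Φ x| ≤ D * |deriv Φ y|)
    {S : T1 → T1} (hlift : ∀ x : ℝ, S ((x : ℝ) : T1) = ((Φ x : ℝ) : T1))
    {A B : Set T1} (hAm : MeasurableSet A) (hB : MeasurableSet B)
    (hAB : S ⁻¹' B = A) (x₀ : ℝ) :
    ∃ r : ℝ, 0 < r ∧ r ≤ 1 / g ∧
      volume Bᶜ ≤ ENNReal.ofReal (2 * D) *
        (volume (Metric.closedBall x₀ r \ ((fun x : ℝ => ((x : ℝ) : T1)) ⁻¹' A)) /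
          volume (Metric.closedBall x₀ r)) := by
  have hg0 : (0 : ℝ) < g := lt_of_lt_of_le one_pos hg
  have hinj : Function.Injective Φ := by
    intro a b hab
    have h := hexp a b
    rw [hab, sub_self, abs_zero] at h
    have : |a - b| ≤ 0 := nonpos_of_mul_nonpos_right (by linarith) hg0
    have := abs_nonneg (a - b)
    have : |a - b| = 0 := le_antisymm ‹|a - b| ≤ 0› this
    exact sub_eq_zero.1 (abs_eq_zero.1 this)
  obtain ⟨u, v, m, hux, hxv, hr0, hrle, himg⟩ :=
    branch_exists hΦ hc' hg hlb hexp x₀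
  set A' : Set ℝ := (fun x : ℝ => ((x : ℝ) : T1)) ⁻¹' A with hA'
  have hA'm : MeasurableSet A' := AddCircle.measurable_mk' hAm
  set r : ℝ := v - u with hrdef
  set J : Set ℝ := Set.Icc u v with hJ
  have hJm : MeasurableSet J := measurableSet_Icc
  have hJcb : J ⊆ Metric.closedBall x₀ r := by
    intro x hx
    rcases Set.mem_Icc.1 hx with ⟨h1, h2⟩
    rw [Metric.mem_closedBall, Real.dist_eq, abs_le]
    constructor <;> [linarith; linarith]
  refine ⟨r, hr0, hrle, ?_⟩
  -- Step 1
  have mp := AddCircle.measurePreserving_mk 1 (m : ℝ)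
  have hmeq : volume Bᶜ = volume ((fun x : ℝ => ((x : ℝ) : T1)) ⁻¹' Bᶜ ∩ Ioc (m : ℝ) ((m : ℝ) + 1)) := by
    have h1 := mp.measure_preimage (hB.compl.nullMeasurableSet)
    rw [Measure.restrict_apply (AddCircle.measurable_mk' hB.compl)] at h1
    exact h1.symm
  -- Step 2
  have hsub : (fun x : ℝ => ((x : ℝ) : T1)) ⁻¹' Bᶜ ∩ Ioc (m : ℝ) ((m : ℝ) + 1) ⊆
      Φ '' (J \ A') := by
    rintro w ⟨hw1, hw2⟩
    have hw3 : w ∈ Set.Icc (m : ℝ) ((m : ℝ) + 1) := Set.Ioc_subset_Icc_self hw2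
    rw [← himg] at hw3
    obtain ⟨t, ht, rfl⟩ := hw3
    refine ⟨t, ⟨ht, fun hta => ?_⟩, rfl⟩
    have h9 : ((t : ℝ) : T1) ∈ A := hta
    rw [← hAB] at h9
    have h10 : S ((t : ℝ) : T1) ∈ B := h9
    rw [hlift t] at h10
    exact hw1 h10
  -- Step 3
  have him : volume (Φ '' (J \ A')) = ∫⁻ x in J \ A', ENNReal.ofReal |deriv Φ x| :=
    measure_image_eq_lintegral_abs_deriv (hJm.diff hA'm) hΦ hinj
  -- Step 4 : pointwise derivative bound on J
  have hJint : ∫⁻ x in J, ENNReal.ofReal |deriv Φ x| = 1 := by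
    rw [← measure_image_eq_lintegral_abs_deriv hJm hΦ hinj, himg, Real.volume_Icc]
    simp
  have hptJ : ∀ y ∈ J, |deriv Φ y| * r ≤ D := by
    intro y hy
    have hpw : ∀ x ∈ J, ENNReal.ofReal (|deriv Φ y| / D) ≤ ENNReal.ofReal |deriv Φ x| := by
      intro x hx
      apply ENNReal.ofReal_le_ofReal
      rw [div_le_iff₀ hD]
      have hmemx : Φ x ∈ Set.Icc (m : ℝ) ((m : ℝ) + 1) := himg ▸ Set.mem_image_of_mem Φ hx
      have hmemy : Φ y ∈ Set.Icc (m : ℝ) ((m : ℝ) + 1) := himg ▸ Set.mem_image_of_mem Φ hy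
      rcases Set.mem_Icc.1 hmemx with ⟨ha, hb⟩
      rcases Set.mem_Icc.1 hmemy with ⟨hc, hd⟩
      have : |Φ y - Φ x| ≤ 1 := by rw [abs_le]; constructor <;> linarith
      have := hdist y x this
      linarith [this]
    have hle : ∫⁻ x in J, ENNReal.ofReal (|deriv Φ y| / D) ≤
        ∫⁻ x in J, ENNReal.ofReal |deriv Φ x| := setLIntegral_mono' hJm hpw
    rw [hJint, setLIntegral_const, Real.volume_Icc, ← hrdef,
      ← ENNReal.ofReal_mul (by positivity)] at hle
    have := ENNReal.ofReal_le_one.1 hle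
    rw [div_mul_eq_mul_div, div_le_one hD] at this
    linarith
  -- Step 5
  have h5 : ∫⁻ x in J \ A', ENNReal.ofReal |deriv Φ x| ≤
      ENNReal.ofReal (D / r) * volume (J \ A') := by
    rw [← setLIntegral_const]
    apply setLIntegral_mono' (hJm.diff hA'm)
    intro x hx
    apply ENNReal.ofReal_le_ofReal
    rw [le_div_iff₀ hr0]
    exact hptJ x hx.1
  -- Step 6
  have h6 : volume (J \ A') ≤ volume (Metric.closedBall x₀ r \ A') :=
    measure_mono (Set.diff_subset_diff_left hJcb)
  -- Step 7 arithmetic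
  have key : ENNReal.ofReal (D / r) = ENNReal.ofReal (2 * D) * (ENNReal.ofReal (2 * r))⁻¹ := by
    rw [show D / r = (2 * D) / (2 * r) by rw [mul_div_mul_left _ _ (two_ne_zero)],
      ENNReal.ofReal_div_of_pos (by linarith), div_eq_mul_inv]
  calc volume Bᶜ = volume ((fun x : ℝ => ((x : ℝ) : T1)) ⁻¹' Bᶜ ∩ Ioc (m : ℝ) ((m : ℝ) + 1)) :=
        hmeq
    _ ≤ volume (Φ '' (J \ A')) := measure_mono hsub
    _ = ∫⁻ x in J \ A', ENNReal.ofReal |deriv Φ x| := him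
    _ ≤ ENNReal.ofReal (D / r) * volume (J \ A') := h5
    _ ≤ ENNReal.ofReal (D / r) * volume (Metric.closedBall x₀ r \ A') := by
        exact mul_le_mul_right h6 _
    _ = ENNReal.ofReal (2 * D) *
        (volume (Metric.closedBall x₀ r \ A') / volume (Metric.closedBall x₀ r)) := by
        rw [key, Real.volume_closedBall, div_eq_mul_inv]
        ring


end Aux

/-- exactness: the tail σ-algebra
`⋂_n (T_{1,n})⁻¹(ℬ)` of a sequence of `C^{1+Lip}` expanding circle maps is
trivial for Lebesgue measure. -/
theorem tail_sigma_algebra_trivial (γ K K₁ : ℝ)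
    (h3 : 3 < γ) (hγK : γ ≤ K) (hK₁ : 0 ≤ K₁)
    (T : ℕ → T1 → T1) (hT : ∀ n, ExpandingC1Lip (T n) γ K K₁)
    (A : Set T1)
    (hA : ∀ n : ℕ, 1 ≤ n →
      MeasurableSet[MeasurableSpace.comap (compSeq T n)
        (inferInstance : MeasurableSpace T1)] A) :
    volume A = 0 ∨ volume A = 1 := by
  classical
  have hγ0 : (0:ℝ) < γ := by linarith
  set c : ℝ := K₁ / (γ * (γ - 1)) with hcdef
  set D : ℝ := Real.exp c with hDdef
  have hD0 : 0 < D := Real.exp_pos c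
  set De : ℝ≥0∞ := ENNReal.ofReal (2 * D) with hDe
  have hDe0 : De ≠ 0 := by
    rw [hDe]
    simp only [ne_eq, ENNReal.ofReal_eq_zero, not_le]
    positivity
  have hDetop : De ≠ ⊤ := ENNReal.ofReal_ne_top
  -- continuity / measurability of the compositions
  have hTcont : ∀ n, Continuous (T n) := by
    intro n
    obtain ⟨F, hFlift, hFdiff, -, -⟩ := hT n
    refine (QuotientAddGroup.isQuotientMap_mk _).continuous_iff.mpr ?_
    have he : (T n ∘ fun x : ℝ => ((x : ℝ) : T1)) = fun x : ℝ => ((F x : ℝ) : T1) :=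
      funext hFlift
    exact he ▸ (AddCircle.continuous_mk' 1).comp hFdiff.continuous
  have hScont : ∀ n, Continuous (compSeq T n) := by
    intro n
    induction n with
    | zero => exact continuous_id
    | succ k ih => exact (hTcont (k + 1)).comp ih
  have hBex : ∀ n : ℕ, ∃ Bn : Set T1, MeasurableSet Bn ∧ compSeq T (n + 1) ⁻¹' Bn = A := by
    intro n
    have h := hA (n + 1) (by omega)
    rwa [MeasurableSpace.measurableSet_comap] at h
  choose B hBm hBA using hBex
  have hAmeas : MeasurableSet A := by
    rw [← hBA 0]
    exact (hScont 1).measurable (hBm 0)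
  by_contra hcon
  push_neg at hcon
  obtain ⟨h0, h1⟩ := hcon
  set A' : Set ℝ := (fun x : ℝ => ((x : ℝ) : T1)) ⁻¹' A with hA'def
  have hA'm : MeasurableSet A' := AddCircle.measurable_mk' hAmeas
  have hvuniv : volume (Set.univ : Set T1) = 1 := UnitAddCircle.measure_univ
  have hAc0 : volume Aᶜ ≠ 0 := by
    intro hc
    apply h1
    have h2 := measure_add_measure_compl (μ := volume) hAmeas
    rwa [hc, add_zero, hvuniv] at h2
  have hvolC : ∀ C : Set T1, MeasurableSet C →
      volume ((fun x : ℝ => ((x : ℝ) : T1)) ⁻¹' C ∩ Ioc (0:ℝ) (0 + 1)) = volume C := by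
    intro C hC
    have h2 := (AddCircle.measurePreserving_mk 1 (0:ℝ)).measure_preimage hC.nullMeasurableSet
    rwa [Measure.restrict_apply (AddCircle.measurable_mk' hC)] at h2
  have hA'0 : volume A' ≠ 0 := by
    intro hc
    exact h0 (by rw [← hvolC A hAmeas]; exact measure_mono_null Set.inter_subset_left hc)
  have hA'c0 : volume A'ᶜ ≠ 0 := by
    intro hc
    apply hAc0
    rw [← hvolC Aᶜ hAmeas.compl]
    exact measure_mono_null (fun x hx => hx.1) hc
  -- Lebesgue density points
  have key_pt : ∀ E : Set ℝ, MeasurableSet E → volume E ≠ 0 →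
      ∃ x₀ : ℝ, Tendsto (fun r => volume (E ∩ Metric.closedBall x₀ r) /
        volume (Metric.closedBall x₀ r)) (nhdsWithin 0 (Set.Ioi 0)) (nhds 1) := by
    intro E hEm hE0
    have hbes := Besicovitch.ae_tendsto_measure_inter_div_of_measurableSet
      (volume : Measure ℝ) hEm
    rw [MeasureTheory.ae_iff] at hbes
    by_contra hno
    push_neg at hno
    apply hE0
    refine measure_mono_null (fun x hx => ?_) hbes
    simp only [Set.mem_setOf_eq]
    intro hcon2
    rw [Set.indicator_of_mem hx, Pi.one_apply] at hcon2
    exact hno x hcon2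
  obtain ⟨x₀, hx₀⟩ := key_pt A' hA'm hA'0
  obtain ⟨y₀, hy₀⟩ := key_pt A'ᶜ hA'm.compl hA'c0
  have hwx := density_tendsto_zero hA'm hx₀
  have hwy := density_tendsto_zero hA'm.compl hy₀
  -- per-n bounds from the core estimate
  have hcore : ∀ n : ℕ, ∃ r s : ℝ,
      (0 < r ∧ r ≤ (1 / γ) ^ (n + 1) ∧
        volume (B n)ᶜ ≤ De * (volume (Metric.closedBall x₀ r \ A') /
          volume (Metric.closedBall x₀ r))) ∧
      (0 < s ∧ s ≤ (1 / γ) ^ (n + 1) ∧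
        volume (B n) ≤ De * (volume (Metric.closedBall y₀ s \ A'ᶜ) /
          volume (Metric.closedBall y₀ s))) := by
    intro n
    obtain ⟨Φ, hdiff, hcont', hlift, hlb, hexp, hdist⟩ := comp_lift_exists h3 hK₁ T hT (n + 1)
    have hg1 : (1:ℝ) ≤ γ ^ (n + 1) := one_le_pow₀ (by linarith)
    have hdist1 : ∀ x y, |Φ x - Φ y| ≤ 1 → |deriv Φ x| ≤ D * |deriv Φ y| := by
      intro x y h
      have h2 := hdist 1 zero_le_one le_rfl x y h
      rwa [mul_one] at h2
    have hpow : 1 / γ ^ (n + 1) = (1 / γ) ^ (n + 1) := by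
      rw [one_div, one_div, inv_pow]
    obtain ⟨r, hr0, hrle, hrB⟩ := core_bound hdiff hcont' hg1 hD0 hlb hexp hdist1 hlift
      hAmeas (hBm n) (hBA n) x₀
    obtain ⟨s, hs0, hsle, hsB⟩ := core_bound hdiff hcont' hg1 hD0 hlb hexp hdist1 hlift
      hAmeas.compl (hBm n).compl (by rw [Set.preimage_compl, hBA n]) y₀
    rw [compl_compl, Set.preimage_compl, ← hA'def] at hsB
    rw [← hA'def] at hrB
    rw [hpow] at hrle hsle
    exact ⟨r, s, ⟨hr0, hrle, hrB⟩, hs0, hsle, hsB⟩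
  choose rr ss hcr hcs using hcore
  have hgeo : Tendsto (fun n : ℕ => (1 / γ) ^ (n + 1)) atTop (nhds 0) := by
    have h01 : (1 / γ) < 1 := by rw [div_lt_one hγ0]; linarith
    have hpos : (0:ℝ) ≤ 1 / γ := by positivity
    exact (tendsto_pow_atTop_nhds_zero_of_lt_one hpos h01).comp (tendsto_add_atTop_nat 1)
  have hrt : Tendsto rr atTop (nhdsWithin 0 (Set.Ioi 0)) := by
    apply tendsto_nhdsWithin_of_tendsto_nhds_of_eventually_within
    · exact squeeze_zero (fun n => (hcr n).1.le) (fun n => (hcr n).2.1) hgeo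
    · exact Eventually.of_forall fun n => (hcr n).1
  have hst : Tendsto ss atTop (nhdsWithin 0 (Set.Ioi 0)) := by
    apply tendsto_nhdsWithin_of_tendsto_nhds_of_eventually_within
    · exact squeeze_zero (fun n => (hcs n).1.le) (fun n => (hcs n).2.1) hgeo
    · exact Eventually.of_forall fun n => (hcs n).1
  have hx := hwx.comp hrt
  have hy := hwy.comp hst
  have hε : (0:ℝ≥0∞) < (4 * De)⁻¹ :=
    ENNReal.inv_pos.2 (ENNReal.mul_ne_top (by norm_num) hDetop)
  obtain ⟨n, hn1, hn2⟩ := ((ENNReal.tendsto_nhds_zero.1 hx ((4 * De)⁻¹) hε).and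
    (ENNReal.tendsto_nhds_zero.1 hy ((4 * De)⁻¹) hε)).exists
  simp only [Function.comp_apply] at hn1 hn2
  have hq : De * (4 * De)⁻¹ = 4⁻¹ := by
    rw [ENNReal.mul_inv (Or.inl (by norm_num)) (Or.inl (by norm_num)),
      mul_comm, mul_assoc, ENNReal.inv_mul_cancel hDe0 hDetop, mul_one]
  have hb1 : volume (B n)ᶜ ≤ 4⁻¹ := by
    refine le_trans (hcr n).2.2 ?_
    rw [← hq]
    exact mul_le_mul_right hn1 De
  have hb2 : volume (B n) ≤ 4⁻¹ := by
    refine le_trans (hcs n).2.2 ?_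
    rw [← hq]
    exact mul_le_mul_right hn2 De
  have huniv : (1:ℝ≥0∞) ≤ 4⁻¹ + 4⁻¹ := by
    calc (1:ℝ≥0∞) = volume (Set.univ : Set T1) := hvuniv.symm
      _ = volume (B n ∪ (B n)ᶜ) := by rw [Set.union_compl_self]
      _ ≤ volume (B n) + volume (B n)ᶜ := measure_union_le _ _
      _ ≤ 4⁻¹ + 4⁻¹ := add_le_add hb2 hb1
  have hhalf : (4⁻¹ + 4⁻¹ : ℝ≥0∞) = 2⁻¹ := by
    rw [← two_mul, show ((4:ℝ≥0∞)) = 2 * 2 by norm_num,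
      ENNReal.mul_inv (Or.inl (by norm_num)) (Or.inl (by norm_num)),
      ← mul_assoc, ENNReal.mul_inv_cancel (by norm_num) ENNReal.ofNat_ne_top, one_mul]
  rw [hhalf] at huniv
  exact absurd huniv (not_le.2 (ENNReal.inv_lt_one.2 (by norm_num : (1:ℝ≥0∞) < 2)))

end DRW
end
end

section
/- Let Ḡ : 𝕋 → 𝕋 be continuous except possibly at the two endpoints of an arc W̄, piecewise C^{1+Lip} with |Ḡ′| ≥ γ > 1 on each piece, and suppose Ḡ has a fixed point x₀ with Ḡ(x₀) = x₀ at which the function τ̄ is locally constant (in particular this holds if x₀ is not an endpoint of W̄), where τ̄(x) = 3 for x ∈ W̄ and τ̄(x) = 1 for x ∉ W̄. Let h be an invariant probability density for Ḡ (P_Ḡ h = h, ∫_𝕋 h dx = 1) which is bounded and satisfies h(x) ≥ σ > 0 for all x, so that 1 < ∫_𝕋 τ̄ h dx < 3. Then τ̄ is not cohomologous to a constant under Ḡ: there is no function g of bounded variation on 𝕋 such that τ̄(x) − ∫_𝕋 τ̄(y) h(y) dy = g(x) − g(Ḡ(x)) for Lebesgue-almost every x ∈ 𝕋. -/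
open MeasureTheory Set Filter
open scoped ENNReal NNReal

attribute [local instance] Classical.propDecidable

noncomputable section

namespace DRW

theorem coe_iff (x y : ℝ) : (x : T1) = y ↔ ∃ k : ℤ, x = y + k := by
  constructor
  · intro h
    have hk := QuotientAddGroup.eq.mp h
    rw [AddSubgroup.mem_zmultiples_iff] at hk
    obtain ⟨k, hk⟩ := hk
    rw [zsmul_eq_mul, mul_one] at hk
    exact ⟨-k, by push_cast; linarith⟩
  · rintro ⟨k, rfl⟩
    rw [QuotientAddGroup.eq, AddSubgroup.mem_zmultiples_iff]
    exact ⟨-k, by rw [zsmul_eq_mul, mul_one]; push_cast; ring⟩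

theorem gbound (g : T1 → ℝ) (hg : eVar g ≠ ⊤) (x y : T1) :
    |g x - g y| ≤ (eVar g).toReal := by
  obtain ⟨tx, htx, rfl⟩ := AddCircle.eq_coe_Ico x
  obtain ⟨ty, hty, rfl⟩ := AddCircle.eq_coe_Ico y
  have h1 := eVariationOn.edist_le (fun s : ℝ => g (s : T1))
    (Ico_subset_Icc_self htx) (Ico_subset_Icc_self hty)
  rw [edist_dist, Real.dist_eq] at h1
  exact (ENNReal.ofReal_le_iff_le_toReal hg).mp h1

theorem expand (F : ℝ → ℝ) (hF : Differentiable ℝ F) (γ : ℝ) (hd : ∀ x, γ ≤ |deriv F x|)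
    (x y : ℝ) : γ * |x - y| ≤ |F x - F y| := by
  rcases eq_or_ne x y with rfl | hne
  · simp
  have key : ∀ u v : ℝ, u < v → γ * |u - v| ≤ |F u - F v| := by
    intro u v huv
    obtain ⟨c, _, hceq⟩ := exists_deriv_eq_slope F huv
      hF.continuous.continuousOn (fun z _ => (hF z).differentiableWithinAt)
    have hvu : (0:ℝ) < v - u := by linarith
    have h1 : F v - F u = deriv F c * (v - u) := by
      field_simp at hceq; linarith
    have : |F v - F u| = |deriv F c| * (v - u) := by
      rw [h1, abs_mul, abs_of_pos hvu]
    rw [abs_sub_comm u v, abs_of_pos hvu, abs_sub_comm (F u) (F v), this]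
    exact mul_le_mul_of_nonneg_right (hd c) hvu.le
  rcases hne.lt_or_gt with hlt | hlt
  · exact key x y hlt
  · rw [abs_sub_comm x y, abs_sub_comm (F x) (F y)]; exact key y x hlt

theorem nullpre (F : ℝ → ℝ) (γ : ℝ) (hγ : 0 < γ)
    (hexp : ∀ x y, γ * |x - y| ≤ |F x - F y|)
    (A : Set ℝ) (hA : volume A = 0) : volume (F ⁻¹' A) = 0 := by
  have hinj : Function.Injective F := by
    intro x y hxy
    by_contra hne
    have h1 := hexp x y
    rw [hxy, sub_self, abs_zero] at h1
    have : 0 < γ * |x - y| := mul_pos hγ (abs_pos.mpr (sub_ne_zero.mpr hne))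
    linarith
  set g := Function.invFun F with hg
  have hleft : Function.LeftInverse g F := Function.leftInverse_invFun hinj
  have hlip : LipschitzOnWith (Real.toNNReal γ⁻¹) g (range F) := by
    intro u hu v hv
    obtain ⟨x, rfl⟩ := hu
    obtain ⟨y, rfl⟩ := hv
    rw [hleft, hleft]
    rw [edist_dist, edist_dist, Real.dist_eq, Real.dist_eq]
    rw [← ENNReal.ofReal_coe_nnreal, ← ENNReal.ofReal_mul (by positivity)]
    apply ENNReal.ofReal_le_ofReal
    rw [Real.coe_toNNReal _ (by positivity), inv_mul_eq_div, le_div_iff₀ hγ, mul_comm]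
    exact hexp x y
  have him : volume (g '' (A ∩ range F)) = 0 := by
    have h1 := (hlip.mono (inter_subset_right (s := A))).hausdorffMeasure_image_le (zero_le_one)
    rw [← MeasureTheory.hausdorffMeasure_real] at *
    refine le_antisymm (h1.trans ?_) zero_le
    have : μH[1] (A ∩ range F) = 0 :=
      le_antisymm (le_trans (measure_mono inter_subset_left) (le_of_eq hA)) zero_le
    rw [this, mul_zero]
  have hsub2 : F ⁻¹' A ⊆ g '' (A ∩ range F) := fun x hx =>
    ⟨F x, ⟨hx, mem_range_self x⟩, hleft x⟩
  exact le_antisymm (le_trans (measure_mono hsub2) (le_of_eq him)) zero_le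

theorem pi_null (B : Set T1) (hB : MeasurableSet B) (h0 : volume B = 0) :
    volume ((fun x : ℝ => (x : T1)) ⁻¹' B) = 0 := by
  set S := (fun x : ℝ => (x : T1)) ⁻¹' B
  have hcover : S ⊆ ⋃ n : ℤ, S ∩ Ioc (n : ℝ) (n + 1) := by
    intro x hx
    have := iUnion_Ioc_intCast (α := ℝ)
    have hx2 : x ∈ ⋃ n : ℤ, Ioc (n:ℝ) (n+1) := this ▸ mem_univ x
    obtain ⟨t, ht⟩ := mem_iUnion.mp hx2
    exact mem_iUnion.mpr ⟨t, hx, ht⟩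
  refine le_antisymm (le_trans (measure_mono hcover) ?_) zero_le
  refine le_trans (measure_iUnion_le _) ?_
  have : ∀ n : ℤ, volume (S ∩ Ioc (n:ℝ) (n+1)) = 0 := by
    intro n
    have hmp := AddCircle.measurePreserving_mk 1 (n : ℝ)
    have := hmp.measure_preimage (hB.nullMeasurableSet)
    rw [Measure.restrict_apply₀] at this
    · rw [h0] at this; simpa [S] using this
    · exact (measurable_quotient_mk' (s := QuotientAddGroup.leftRel (AddSubgroup.zmultiples (1:ℝ))) hB).nullMeasurableSet
  simp [this]


theorem memW {Wbar : Set T1} {a l : ℝ} (hWeq : Wbar = (fun x : ℝ => (x : T1)) '' Set.Ico a (a + l))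
    (t : ℝ) : (t : T1) ∈ Wbar ↔ ∃ k : ℤ, t + k ∈ Set.Ico a (a + l) := by
  rw [hWeq]
  constructor
  · rintro ⟨s, hs, hst⟩
    obtain ⟨k, hk⟩ := (coe_iff s t).mp hst
    exact ⟨k, hk ▸ hs⟩
  · rintro ⟨k, hk⟩
    exact ⟨t + k, hk, (coe_iff _ _).mpr ⟨k, rfl⟩⟩

theorem localize (γ : ℝ) (hγ : 1 < γ) (Gbar : T1 → T1) (Wbar : Set T1) (a l : ℝ)
    (hl : 0 < l) (hl1 : l < 1)
    (hWeq : Wbar = (fun x : ℝ => (x : T1)) '' Set.Ico a (a + l))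
    (F₁ F₂ : ℝ → ℝ) (hF₁ : Differentiable ℝ F₁) (hF₂ : Differentiable ℝ F₂)
    (hd₁ : ∀ x, γ ≤ |deriv F₁ x|) (hd₂ : ∀ x, γ ≤ |deriv F₂ x|)
    (hb₁ : ∀ x ∈ Set.Ioo a (a + l), Gbar (x : T1) = ((F₁ x : ℝ) : T1))
    (hb₂ : ∀ x ∈ Set.Ioo (a + l) (a + 1), Gbar (x : T1) = ((F₂ x : ℝ) : T1))
    (x₀ : T1) (hfix : Gbar x₀ = x₀)
    (hloc : ∀ᶠ y in nhds x₀, tauBar Wbar y = tauBar Wbar x₀) :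
    ∃ (xt : ℝ) (F : ℝ → ℝ) (r : ℝ), 0 < r ∧ (xt : T1) = x₀ ∧ Differentiable ℝ F ∧
      (∀ y, γ ≤ |deriv F y|) ∧ F xt = xt ∧
      ∀ y ∈ Metric.ball xt r, Gbar (y : T1) = ((F y : ℝ) : T1) := by
  have hcont : Continuous (fun x : ℝ => (x : T1)) := continuous_quotient_mk'
  obtain ⟨xt0, hxt0⟩ := (AddCircle.equivIco 1 a).symm.surjective x₀
  have hmem : (xt0 : ℝ) ∈ Set.Ico a (a + 1) := xt0.2
  have hx₀ : ((xt0 : ℝ) : T1) = x₀ := by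
    rw [← hxt0]; rfl
  -- endpoint eliminations
  have hne_a : (xt0 : ℝ) ≠ a := by
    intro heq
    have hWx₀ : x₀ ∈ Wbar := by
      rw [← hx₀, heq, memW hWeq]; exact ⟨0, by constructor <;> simp [hl.le, hl]⟩
    have hτ : tauBar Wbar x₀ = 3 := if_pos hWx₀
    have htend : Tendsto (fun t : ℝ => ((a - t : ℝ) : T1)) (nhdsWithin 0 (Set.Ioi 0)) (nhds x₀) := by
      apply Tendsto.mono_left _ nhdsWithin_le_nhds
      rw [← hx₀, heq]
      have h0 : Tendsto (fun t : ℝ => a - t) (nhds 0) (nhds a) := by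
        simpa using (continuous_sub_left a).tendsto (0:ℝ)
      exact (hcont.tendsto a).comp h0
    have hev : ∀ᶠ t in nhdsWithin (0:ℝ) (Set.Ioi 0), tauBar Wbar ((a - t : ℝ) : T1) = 3 := by
      filter_upwards [htend.eventually hloc] with t ht using (by rw [ht, hτ])
    have hev2 : ∀ᶠ t in nhdsWithin (0:ℝ) (Set.Ioi 0), (0:ℝ) < t ∧ t < 1 - l := by
      filter_upwards [self_mem_nhdsWithin,
        eventually_nhdsWithin_of_eventually_nhds
          (eventually_lt_nhds (by linarith : (0:ℝ) < 1 - l))] with t h1 h2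
      exact ⟨h1, h2⟩
    obtain ⟨t, h3, h1, h2⟩ := (hev.and hev2).exists
    have : ((a - t : ℝ) : T1) ∉ Wbar := by
      rw [memW hWeq]
      rintro ⟨k, hk1, hk2⟩
      have hk1' : (t:ℝ) ≤ k := by linarith
      have hk2' : (k:ℝ) < t + l := by linarith
      have h4 : (0:ℝ) < k := lt_of_lt_of_le h1 hk1'
      have h5 : (k:ℝ) < 1 := by linarith
      have h4' : 0 < k := by exact_mod_cast h4
      have h5' : k < 1 := by exact_mod_cast h5
      omega
    rw [tauBar, if_neg this] at h3
    norm_num at h3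
  have hne_al : (xt0 : ℝ) ≠ a + l := by
    intro heq
    have hWx₀ : x₀ ∉ Wbar := by
      rw [← hx₀, heq, memW hWeq]
      rintro ⟨k, hk1, hk2⟩
      have hk1' : (-l:ℝ) ≤ k := by linarith
      have hk2' : (k:ℝ) < 0 := by linarith
      have h4 : k < 0 := by exact_mod_cast hk2'
      have h4' : k ≤ -1 := by omega
      have : (-l:ℝ) ≤ -1 := le_trans hk1' (by exact_mod_cast h4')
      linarith
    have hτ : tauBar Wbar x₀ = 1 := if_neg hWx₀
    have htend : Tendsto (fun t : ℝ => ((a + l - t : ℝ) : T1)) (nhdsWithin 0 (Set.Ioi 0)) (nhds x₀) := by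
      apply Tendsto.mono_left _ nhdsWithin_le_nhds
      rw [← hx₀, heq]
      have h0 : Tendsto (fun t : ℝ => a + l - t) (nhds 0) (nhds (a + l)) := by
        simpa using (continuous_sub_left (a + l)).tendsto (0:ℝ)
      exact (hcont.tendsto (a + l)).comp h0
    have hev : ∀ᶠ t in nhdsWithin (0:ℝ) (Set.Ioi 0), tauBar Wbar ((a + l - t : ℝ) : T1) = 1 := by
      filter_upwards [htend.eventually hloc] with t ht using (by rw [ht, hτ])
    have hev2 : ∀ᶠ t in nhdsWithin (0:ℝ) (Set.Ioi 0), (0:ℝ) < t ∧ t < l := by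
      filter_upwards [self_mem_nhdsWithin,
        eventually_nhdsWithin_of_eventually_nhds (eventually_lt_nhds hl)] with t h1 h2
      exact ⟨h1, h2⟩
    obtain ⟨t, h3, h1, h2⟩ := (hev.and hev2).exists
    have : ((a + l - t : ℝ) : T1) ∈ Wbar := by
      rw [memW hWeq]
      exact ⟨0, by push_cast; constructor <;> linarith⟩
    rw [tauBar, if_pos this] at h3
    norm_num at h3
  -- now xt0 is in one of the open branch intervals
  have hcase : (xt0 : ℝ) ∈ Set.Ioo a (a + l) ∨ (xt0 : ℝ) ∈ Set.Ioo (a + l) (a + 1) := by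
    rcases lt_trichotomy (xt0 : ℝ) (a + l) with h | h | h
    · exact Or.inl ⟨lt_of_le_of_ne hmem.1 (Ne.symm hne_a), h⟩
    · exact absurd h hne_al
    · exact Or.inr ⟨h, hmem.2⟩
  obtain ⟨F₀, hF₀, hd₀, O, hOopen, hOsub, hmemO⟩ :
      ∃ (F₀ : ℝ → ℝ), Differentiable ℝ F₀ ∧ (∀ y, γ ≤ |deriv F₀ y|) ∧
        ∃ O : Set ℝ, IsOpen O ∧ (∀ y ∈ O, Gbar (y : T1) = ((F₀ y : ℝ) : T1)) ∧ (xt0 : ℝ) ∈ O := by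
    rcases hcase with h | h
    · exact ⟨F₁, hF₁, hd₁, Set.Ioo a (a + l), isOpen_Ioo, hb₁, h⟩
    · exact ⟨F₂, hF₂, hd₂, Set.Ioo (a + l) (a + 1), isOpen_Ioo, hb₂, h⟩
  obtain ⟨r, hr, hball⟩ := Metric.isOpen_iff.mp hOopen _ hmemO
  -- fixed point adjustment
  have hfx : ((F₀ (xt0 : ℝ) : ℝ) : T1) = ((xt0 : ℝ) : T1) := by
    rw [← hOsub _ hmemO, hx₀, hfix]
  obtain ⟨m, hm⟩ := (coe_iff _ _).mp hfx
  refine ⟨(xt0 : ℝ), fun y => F₀ y - m, r, hr, hx₀, hF₀.sub_const _, ?_, by simp only []; rw [hm]; ring, ?_⟩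
  · intro y; rw [deriv_sub_const]; exact hd₀ y
  · intro y hy
    rw [hOsub _ (hball hy)]
    exact (coe_iff _ _).mpr ⟨m, by push_cast; ring⟩

theorem main (γ : ℝ) (hγ : 1 < γ)
    (Gbar : T1 → T1) (Wbar : Set T1) (a l : ℝ)
    (hl : 0 < l) (hl1 : l < 1)
    (hWeq : Wbar = (fun x : ℝ => (x : T1)) '' Set.Ico a (a + l))
    (F₁ F₂ : ℝ → ℝ) (hF₁ : Differentiable ℝ F₁) (hF₂ : Differentiable ℝ F₂)
    (hd₁ : ∀ x, γ ≤ |deriv F₁ x|) (hd₂ : ∀ x, γ ≤ |deriv F₂ x|)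
    (hb₁ : ∀ x ∈ Set.Ioo a (a + l), Gbar (x : T1) = ((F₁ x : ℝ) : T1))
    (hb₂ : ∀ x ∈ Set.Ioo (a + l) (a + 1), Gbar (x : T1) = ((F₂ x : ℝ) : T1))
    (x₀ : T1) (hfix : Gbar x₀ = x₀)
    (hloc : ∀ᶠ y in nhds x₀, tauBar Wbar y = tauBar Wbar x₀)
    (c : ℝ) (hc1 : 1 < c) (hc3 : c < 3)
    (g : T1 → ℝ) (hgvar : eVar g ≠ ⊤)
    (hae : ∀ᵐ x ∂(volume : Measure T1), tauBar Wbar x - c = g x - g (Gbar x)) :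
    False := by
  have hγ0 : (0:ℝ) < γ := by linarith
  have hcont : Continuous (fun x : ℝ => (x : T1)) := continuous_quotient_mk'
  obtain ⟨xt, F, r, hr, hxt, hFdiff, hFd, hFfix, hgood⟩ :=
    localize γ hγ Gbar Wbar a l hl hl1 hWeq F₁ F₂ hF₁ hF₂ hd₁ hd₂ hb₁ hb₂ x₀ hfix hloc
  have hexp : ∀ x y, γ * |x - y| ≤ |F x - F y| := expand F hFdiff γ hFd
  set ε := tauBar Wbar x₀ - c with hεdef
  have hεpos : 0 < |ε| := by
    rw [abs_pos, hεdef]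
    unfold tauBar
    split <;> intro hcon <;> linarith
  -- locally constant ball
  obtain ⟨δ, hδ, hU⟩ := Metric.eventually_nhds_iff.mp hloc
  have hPopen : IsOpen ((fun y : ℝ => (y : T1)) ⁻¹' Metric.ball x₀ δ) :=
    Metric.isOpen_ball.preimage hcont
  obtain ⟨r2, hr2, hball2⟩ := Metric.isOpen_iff.mp hPopen xt
    (by simp [Set.mem_preimage, hxt, Metric.mem_ball, hδ])
  set ρ := min r r2 with hρdef
  have hρ : 0 < ρ := lt_min hr hr2
  set N := Metric.ball xt ρ with hNdef
  -- bad sets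
  set B := {z : T1 | ¬ (tauBar Wbar z - c = g z - g (Gbar z))} with hBdef
  have hB : volume B = 0 := by rw [← MeasureTheory.ae_iff]; exact hae
  set B' := toMeasurable volume B with hB'def
  have hB'null : volume B' = 0 := by rw [measure_toMeasurable]; exact hB
  set R := (fun y : ℝ => (y : T1)) ⁻¹' B' with hRdef
  have hRnull : volume R = 0 := pi_null B' (measurableSet_toMeasurable _ _) hB'null
  have hiter : ∀ k : ℕ, volume (F^[k] ⁻¹' R) = 0 := by
    intro k
    induction k with
    | zero => simpa using hRnull
    | succ k ih =>
        rw [Function.iterate_succ, Set.preimage_comp]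
        exact nullpre F γ hγ0 hexp _ ih
  obtain ⟨n, hn⟩ := exists_nat_gt ((eVar g).toReal / |ε|)
  have hn' : (eVar g).toReal < n * |ε| := by
    rw [div_lt_iff₀ hεpos] at hn; linarith
  -- the good set
  set Sgood := ⋂ k ∈ Finset.range n, F^[k] ⁻¹' N with hSdef
  have hSopen : IsOpen Sgood :=
    isOpen_biInter_finset fun k _ => Metric.isOpen_ball.preimage (hFdiff.continuous.iterate k)
  have hxtS : xt ∈ Sgood := by
    refine Set.mem_iInter₂.mpr fun k _ => ?_
    show F^[k] xt ∈ N
    rw [Function.iterate_fixed hFfix k]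
    exact Metric.mem_ball_self hρ
  have hSpos : 0 < volume Sgood := hSopen.measure_pos volume ⟨xt, hxtS⟩
  have hBadnull : volume (⋃ k ∈ Finset.range n, F^[k] ⁻¹' R) = 0 :=
    (measure_biUnion_null_iff (Finset.range n).countable_toSet).mpr fun k _ => hiter k
  have hex : ∃ x, x ∈ Sgood ∧ x ∉ ⋃ k ∈ Finset.range n, F^[k] ⁻¹' R := by
    by_contra hcon
    push_neg at hcon
    have : Sgood ⊆ ⋃ k ∈ Finset.range n, F^[k] ⁻¹' R := fun x hx => hcon x hx
    exact absurd (le_trans (measure_mono this) (le_of_eq hBadnull)) (not_le.mpr hSpos)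
  obtain ⟨x, hxS, hxB⟩ := hex
  have hxN : ∀ k < n, F^[k] x ∈ N := fun k hk =>
    Set.mem_iInter₂.mp hxS k (Finset.mem_range.mpr hk)
  have hxR : ∀ k < n, F^[k] x ∉ R := fun k hk hmem =>
    hxB (Set.mem_biUnion (Finset.mem_range.mpr hk) hmem)
  -- the step identity
  have hstep : ∀ k < n, ε = g ((F^[k] x : ℝ) : T1) - g ((F^[k+1] x : ℝ) : T1) := by
    intro k hk
    have hzN := hxN k hk
    have hGz : Gbar ((F^[k] x : ℝ) : T1) = ((F^[k+1] x : ℝ) : T1) := by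
      rw [hgood _ (Metric.ball_subset_ball (min_le_left r r2) hzN),
        Function.iterate_succ_apply']
    have hznotB : ((F^[k] x : ℝ) : T1) ∉ B := fun hmem =>
      hxR k hk (Set.mem_preimage.mpr (subset_toMeasurable volume B hmem))
    have heq : tauBar Wbar ((F^[k] x : ℝ) : T1) - c
        = g ((F^[k] x : ℝ) : T1) - g (Gbar ((F^[k] x : ℝ) : T1)) := by
      by_contra hcon; exact hznotB hcon
    have hτz : tauBar Wbar ((F^[k] x : ℝ) : T1) = tauBar Wbar x₀ := by
      apply hU
      have : F^[k] x ∈ Metric.ball xt r2 := Metric.ball_subset_ball (min_le_right r r2) hzN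
      exact Metric.mem_ball.mp (hball2 this)
    rw [hεdef, ← hτz, heq, hGz]
  -- telescope
  have htel := Finset.sum_range_sub' (fun k => g ((F^[k] x : ℝ) : T1)) n
  have hsum : ∑ k ∈ Finset.range n, (g ((F^[k] x : ℝ) : T1) - g ((F^[k+1] x : ℝ) : T1))
      = (n : ℝ) * ε := by
    rw [Finset.sum_congr rfl (fun k hk => (hstep k (Finset.mem_range.mp hk)).symm),
      Finset.sum_const, Finset.card_range, nsmul_eq_mul]
  have hfin : (n : ℝ) * ε = g ((F^[0] x : ℝ) : T1) - g ((F^[n] x : ℝ) : T1) := by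
    rw [← hsum]; exact htel
  have habs : |(n : ℝ) * ε| ≤ (eVar g).toReal := hfin ▸ gbound g hgvar _ _
  rw [abs_mul, Nat.abs_cast] at habs
  linarith


/-- Lemma 6.2: the return time `τ̄` is not cohomologous to a
constant under `Ḡ`. -/
theorem tau_not_coboundary (γ : ℝ) (hγ : 1 < γ)
    (Gbar : T1 → T1) (Wbar : Set T1) (a l : ℝ)
    (hW : IsArc Wbar a l) (hG : PiecewiseC1LipArcLB Gbar a l γ)
    (x₀ : T1) (hfix : Gbar x₀ = x₀)
    (hloc : ∀ᶠ y in nhds x₀, tauBar Wbar y = tauBar Wbar x₀)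
    (h : T1 → ℝ) (hmeas : Measurable h)
    (hinv : ∀ φ : T1 → ℝ, Measurable φ → (∃ M, ∀ x, |φ x| ≤ M) →
      (∫ x : T1, φ (Gbar x) * h x) = ∫ x : T1, φ x * h x)
    (hprob : (∫ x : T1, h x) = 1)
    (hbdd : ∃ M, ∀ x, h x ≤ M)
    (σ : ℝ) (hσ : 0 < σ) (hpos : ∀ x, σ ≤ h x)
    (hmean1 : 1 < ∫ x : T1, tauBar Wbar x * h x)
    (hmean3 : (∫ x : T1, tauBar Wbar x * h x) < 3) :
    ¬ ∃ g : T1 → ℝ, eVar g ≠ ⊤ ∧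
      ∀ᵐ x ∂(volume : Measure T1),
        tauBar Wbar x - ∫ y : T1, tauBar Wbar y * h y = g x - g (Gbar x) := by
  rintro ⟨g, hgvar, hae⟩
  obtain ⟨hl, hlle, hWeq⟩ := hW
  have hl1 : l < 1 := by
    rcases lt_or_eq_of_le hlle with hlt | heq
    · exact hlt
    · exfalso
      have huniv : Wbar = Set.univ := by
        rw [hWeq, heq]
        exact AddCircle.coe_image_Ico_eq (1:ℝ) a
      have htau : ∀ x, tauBar Wbar x = 3 := fun x => if_pos (huniv ▸ Set.mem_univ x)
      have h3 : (∫ x : T1, tauBar Wbar x * h x) = 3 := by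
        calc ∫ x : T1, tauBar Wbar x * h x = ∫ x : T1, 3 * h x := by
              congr 1; funext x; rw [htau]
          _ = 3 * ∫ x : T1, h x := by rw [MeasureTheory.integral_const_mul]
          _ = 3 := by rw [hprob, mul_one]
      linarith [hmean3]
  obtain ⟨F₁, F₂, K₁, hF₁, hF₂, hd₁, hd₂, _, _, hb₁, hb₂⟩ := hG
  exact main γ hγ Gbar Wbar a l hl hl1 hWeq F₁ F₂ hF₁ hF₂ hd₁ hd₂ hb₁ hb₂ x₀ hfix hloc
    _ hmean1 hmean3 g hgvar hae

end DRW
end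
end
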